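/- arXiv:1907.04538 — 3 statements merged into one kernel-verified Lean document; each statement's English description precedes it below -/
import Mathlib

section
/- Let σ ∈ ℝ, ρ > 0, α > 0, β > 0, and 0 < a < b. If ψ : ℝ → ℝ is continuous on [a,b], then the generalized substantial fractional integral satisfies the semigroup property: for all t ∈ [a,b], (σI_a^{α,ρ} (σI_a^{β,ρ} ψ))(t) = (σI_a^{α+β,ρ} ψ)(t). -/
open Real MeasureTheory Set Filter

/-- The first-order generalized substantial differential operator
`(σD^{1,ρ} f)(t) = (t^{1-ρ}/ρ)·f'(t) + σ·f(t)`. Its `m`-fold composition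
`(subD σ ρ)^[m]` is the operator `σD^{m,ρ}`; `subD 0 ρ` iterated gives `D^{m,ρ}`. -/
noncomputable def subD (σ ρ : ℝ) (f : ℝ → ℝ) : ℝ → ℝ :=
  fun t => t ^ (1 - ρ) / ρ * deriv f t + σ * f t

/-- The generalized substantial fractional integral
`(σI_a^{α,ρ} ψ)(t) = (ρ/Γ(α)) ∫_a^t s^{ρ-1} (t^ρ−s^ρ)^{α-1} e^{-σ(t^ρ−s^ρ)} ψ(s) ds`. -/
noncomputable def subI (σ ρ α a : ℝ) (ψ : ℝ → ℝ) : ℝ → ℝ :=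
  fun t => ρ / Real.Gamma α *
    ∫ s in a..t, s ^ (ρ - 1) * (t ^ ρ - s ^ ρ) ^ (α - 1) *
      Real.exp (-σ * (t ^ ρ - s ^ ρ)) * ψ s

/-- The (modified) Katugampola fractional integral
`(I_a^{α,ρ} ψ)(t) = (ρ/Γ(α)) ∫_a^t s^{ρ-1} (t^ρ−s^ρ)^{α-1} ψ(s) ds`. -/
noncomputable def katI (ρ α a : ℝ) (ψ : ℝ → ℝ) : ℝ → ℝ :=
  fun t => ρ / Real.Gamma α *
    ∫ s in a..t, s ^ (ρ - 1) * (t ^ ρ - s ^ ρ) ^ (α - 1) * ψ s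


lemma real_beta (α β y : ℝ) (hα : 0 < α) (hβ : 0 < β) (hy : 0 < y) :
    ∫ t in (0:ℝ)..y, t ^ (α - 1) * (y - t) ^ (β - 1)
      = Real.Gamma α * Real.Gamma β / Real.Gamma (α + β) * y ^ (α + β - 1) := by
  have h1 : ∫ x in (0:ℝ)..y, (x : ℂ) ^ ((α : ℂ) - 1) * ((y : ℂ) - x) ^ ((β : ℂ) - 1)
      = (y : ℂ) ^ ((α : ℂ) + β - 1) * Complex.betaIntegral α β :=
    Complex.betaIntegral_scaled α β hy
  have h2 : ∀ t ∈ Set.uIcc (0:ℝ) y,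
      ((t ^ (α - 1) * (y - t) ^ (β - 1) : ℝ) : ℂ)
       = (t : ℂ) ^ ((α : ℂ) - 1) * ((y : ℂ) - t) ^ ((β : ℂ) - 1) := by
    intro t ht
    rw [Set.uIcc_of_le hy.le] at ht
    push_cast
    rw [Complex.ofReal_cpow ht.1, Complex.ofReal_cpow (by linarith [ht.2])]
    push_cast
    ring_nf
  have h3 : ∫ x in (0:ℝ)..y, ((fun t => (t ^ (α - 1) * (y - t) ^ (β - 1) : ℝ)) x : ℂ)
      = (y : ℂ) ^ ((α : ℂ) + β - 1) * Complex.betaIntegral α β := by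
    rw [← h1]
    exact intervalIntegral.integral_congr h2
  rw [intervalIntegral.integral_ofReal] at h3
  have h4 : Complex.betaIntegral α β
      = ((Real.Gamma α * Real.Gamma β / Real.Gamma (α + β) : ℝ) : ℂ) := by
    have := Complex.Gamma_mul_Gamma_eq_betaIntegral
      (s := (α:ℂ)) (t := (β:ℂ)) (by simpa using hα) (by simpa using hβ)
    have hne : Complex.Gamma ((α:ℂ) + β) ≠ 0 :=
      Complex.Gamma_ne_zero_of_re_pos (by simp; positivity)
    have h5 : Complex.betaIntegral α β
        = Complex.Gamma α * Complex.Gamma β / Complex.Gamma ((α:ℂ) + β) := by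
      rw [eq_div_iff hne]; linear_combination this.symm
    rw [h5]
    push_cast [← Complex.Gamma_ofReal]
    ring
  have hexp : ((α:ℂ) + β - 1) = ((α + β - 1 : ℝ) : ℂ) := by push_cast; ring
  rw [h4, hexp, ← Complex.ofReal_cpow hy.le] at h3
  rw [← Complex.ofReal_mul] at h3
  have h6 := Complex.ofReal_injective h3
  rw [h6]; ring

noncomputable def rlKer (γ X : ℝ) : ℝ → ℝ := Set.indicator (Set.Ioc 0 X) (fun x => x ^ (γ - 1))

lemma ker_zero {γ X t : ℝ} (ht : t ∉ Set.Ioc (0:ℝ) X) : rlKer γ X t = 0 :=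
  Set.indicator_of_notMem ht _

lemma ker_eq {γ X t : ℝ} (ht : t ∈ Set.Ioc (0:ℝ) X) : rlKer γ X t = t ^ (γ - 1) :=
  Set.indicator_of_mem ht _

lemma ker_integrable {γ X : ℝ} (hγ : 0 < γ) (hX : 0 < X) : Integrable (rlKer γ X) := by
  rw [rlKer, integrable_indicator_iff measurableSet_Ioc]
  exact (intervalIntegral.intervalIntegrable_rpow' (by linarith)).1

lemma conv_eval (X : ℝ) (F G : ℝ → ℝ) (hF : ∀ t, t ≤ 0 → F t = 0)
    (hG : ∀ t, t ≤ 0 → G t = 0) (y : ℝ) :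
    MeasureTheory.convolution F G (ContinuousLinearMap.mul ℝ ℝ) volume y
      = ∫ t in Set.Ioo (0:ℝ) y, F t * G (y - t) := by
  rw [MeasureTheory.convolution_def]
  rw [← MeasureTheory.integral_indicator measurableSet_Ioo]
  congr 1 with t
  simp only [ContinuousLinearMap.mul_apply']
  by_cases ht : t ∈ Set.Ioo (0:ℝ) y
  · rw [Set.indicator_of_mem ht]
  · rw [Set.indicator_of_notMem ht]
    rcases le_or_gt t 0 with h | h
    · rw [hF t h, zero_mul]
    · have : ¬ t < y := fun hlt => ht ⟨h, hlt⟩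
      rw [hG (y - t) (by linarith [not_lt.mp this]), mul_zero]

lemma caseB {α β X : ℝ} (hα : 0 < α) (hβ : 0 < β) {y : ℝ} (hy : y ∈ Set.Ioc (0:ℝ) X) :
    MeasureTheory.convolution (rlKer α X) (rlKer β X) (ContinuousLinearMap.mul ℝ ℝ) volume y
      = Real.Gamma α * Real.Gamma β / Real.Gamma (α + β) * y ^ (α + β - 1) := by
  rw [conv_eval X _ _ (fun t ht => ker_zero (fun hm => absurd hm.1 (not_lt.mpr ht)))
    (fun t ht => ker_zero (fun hm => absurd hm.1 (not_lt.mpr ht)))]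
  have : ∫ t in Set.Ioo (0:ℝ) y, rlKer α X t * rlKer β X (y - t)
      = ∫ t in Set.Ioo (0:ℝ) y, t ^ (α - 1) * (y - t) ^ (β - 1) := by
    refine MeasureTheory.setIntegral_congr_fun measurableSet_Ioo (fun t ht => ?_)
    rw [ker_eq ⟨ht.1, le_trans ht.2.le hy.2⟩,
      ker_eq ⟨by linarith [ht.2], by linarith [ht.1, hy.2]⟩]
  rw [this, ← MeasureTheory.integral_Ioc_eq_integral_Ioo,
    ← intervalIntegral.integral_of_le hy.1.le]
  exact real_beta α β y hα hβ hy.1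

lemma caseA {β X : ℝ} (g : ℝ → ℝ) {y : ℝ} (hy0 : 0 < y) (hy : y ≤ X) :
    MeasureTheory.convolution (rlKer β X) (Set.indicator (Set.Ioc 0 X) g)
        (ContinuousLinearMap.mul ℝ ℝ) volume y
      = ∫ w in (0:ℝ)..y, (y - w) ^ (β - 1) * g w := by
  rw [conv_eval X _ _ (fun t ht => ker_zero (fun hm => absurd hm.1 (not_lt.mpr ht)))
    (fun t ht => Set.indicator_of_notMem (fun hm => absurd hm.1 (not_lt.mpr ht)) _)]
  have : ∫ t in Set.Ioo (0:ℝ) y, rlKer β X t * Set.indicator (Set.Ioc 0 X) g (y - t)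
      = ∫ t in Set.Ioo (0:ℝ) y, t ^ (β - 1) * g (y - t) := by
    refine MeasureTheory.setIntegral_congr_fun measurableSet_Ioo (fun t ht => ?_)
    rw [ker_eq ⟨ht.1, le_trans ht.2.le hy⟩,
      Set.indicator_of_mem (show y - t ∈ Set.Ioc (0:ℝ) X from
        ⟨by linarith [ht.2], by linarith [ht.1]⟩) g]
  rw [this, ← MeasureTheory.integral_Ioc_eq_integral_Ioo,
    ← intervalIntegral.integral_of_le hy0.le]
  have h2 := intervalIntegral.integral_comp_sub_left
    (a := (0:ℝ)) (b := y) (fun w => (y - w) ^ (β - 1) * g w) y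
  simp only [sub_zero, sub_self] at h2
  rw [← h2]
  refine intervalIntegral.integral_congr (fun t ht => ?_)
  simp [sub_sub_cancel]

lemma flip_int (X : ℝ) (f : ℝ → ℝ) :
    ∫ t in (0:ℝ)..X, f (X - t) = ∫ v in (0:ℝ)..X, f v := by
  have := intervalIntegral.integral_comp_sub_left (a := (0:ℝ)) (b := X) f X
  simpa using this

lemma conv_zero_of_nonpos {X : ℝ} (F G : ℝ → ℝ) (hF : ∀ t, t ≤ 0 → F t = 0)
    (hG : ∀ t, t ≤ 0 → G t = 0) {y : ℝ} (hy : y ≤ 0) :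
    MeasureTheory.convolution F G (ContinuousLinearMap.mul ℝ ℝ) volume y = 0 := by
  rw [conv_eval X F G hF hG y, Set.Ioo_eq_empty (not_lt.mpr hy),
    MeasureTheory.setIntegral_empty]

lemma RL0 {α β X : ℝ} (hα : 0 < α) (hβ : 0 < β) (hX : 0 < X) (g : ℝ → ℝ)
    (hg : ContinuousOn g (Set.Icc 0 X)) :
    ∫ v in (0:ℝ)..X, (X - v) ^ (α - 1) * ∫ w in (0:ℝ)..v, (v - w) ^ (β - 1) * g w
      = Real.Gamma α * Real.Gamma β / Real.Gamma (α + β)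
        * ∫ v in (0:ℝ)..X, (X - v) ^ (α + β - 1) * g v := by
  set L := ContinuousLinearMap.mul ℝ ℝ with hLdef
  set G := Set.indicator (Set.Ioc 0 X) g with hGdef
  have hGint : Integrable G := by
    rw [hGdef, integrable_indicator_iff measurableSet_Ioc]
    exact (hg.integrableOn_Icc).mono_set Set.Ioc_subset_Icc_self
  have hKα := ker_integrable hα hX
  have hKβ := ker_integrable hβ hX
  have hKα0 : ∀ t, t ≤ (0:ℝ) → rlKer α X t = 0 :=
    fun t ht => ker_zero (fun hm => absurd hm.1 (not_lt.mpr ht))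
  have hKβ0 : ∀ t, t ≤ (0:ℝ) → rlKer β X t = 0 :=
    fun t ht => ker_zero (fun hm => absurd hm.1 (not_lt.mpr ht))
  have hG0 : ∀ t, t ≤ (0:ℝ) → G t = 0 :=
    fun t ht => Set.indicator_of_notMem (fun hm => absurd hm.1 (not_lt.mpr ht)) _
  have hfg : ∀ᵐ y : ℝ, ConvolutionExistsAt (rlKer α X) (rlKer β X) y L volume :=
    hKα.ae_convolution_exists L hKβ
  have hgk : ∀ᵐ y : ℝ, ConvolutionExistsAt (fun x => ‖rlKer β X x‖) (fun x => ‖G x‖) y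
      (ContinuousLinearMap.mul ℝ ℝ) volume :=
    hKβ.norm.ae_convolution_exists (ContinuousLinearMap.mul ℝ ℝ) hGint.norm
  set h := MeasureTheory.convolution (fun x => ‖rlKer β X x‖) (fun x => ‖G x‖)
    (ContinuousLinearMap.mul ℝ ℝ) volume with hhdef
  have hhint : Integrable h :=
    (hKβ.norm.convolution_integrand (ContinuousLinearMap.mul ℝ ℝ) hGint.norm).integral_prod_left
  obtain ⟨M, hM⟩ := isCompact_Icc.exists_bound_of_continuousOn hg
  have hGb : ∀ x, ‖G x‖ ≤ max M 0 := by
    intro x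
    rw [hGdef]
    by_cases hx : x ∈ Set.Ioc (0:ℝ) X
    · rw [Set.indicator_of_mem hx]
      exact le_max_of_le_left (hM x ⟨hx.1.le, hx.2⟩)
    · rw [Set.indicator_of_notMem hx]
      simp
  set C := (max M 0) * ∫ t, ‖rlKer β X t‖ with hCdef
  have hCnn : 0 ≤ C := mul_nonneg (le_max_right _ _) (integral_nonneg fun t => norm_nonneg _)
  have hhnn : ∀ y, 0 ≤ h y := fun y =>
    integral_nonneg fun t => by
      simp only [ContinuousLinearMap.mul_apply']
      positivity
  have hC : ∀ y, ‖h y‖ ≤ C := by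
    intro y
    rw [Real.norm_of_nonneg (hhnn y), hhdef, MeasureTheory.convolution_def]
    simp only [ContinuousLinearMap.mul_apply']
    by_cases hi : Integrable (fun t => ‖rlKer β X t‖ * ‖G (y - t)‖)
    · calc ∫ t, ‖rlKer β X t‖ * ‖G (y - t)‖
          ≤ ∫ t, ‖rlKer β X t‖ * max M 0 :=
            integral_mono hi (hKβ.norm.mul_const _)
              (fun t => mul_le_mul_of_nonneg_left (hGb _) (norm_nonneg _))
        _ = C := by rw [integral_mul_const, hCdef, mul_comm]
    · rw [integral_undef hi]; exact hCnn
  have hfgk : ConvolutionExistsAt (fun x => ‖rlKer α X x‖) h X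
      (ContinuousLinearMap.mul ℝ ℝ) volume := by
    have hmeas : AEStronglyMeasurable (fun t => h (X - t)) volume :=
      hhint.aestronglyMeasurable.comp_quasiMeasurePreserving
        (quasiMeasurePreserving_sub_left_of_right_invariant volume X)
    have := hKα.norm.bdd_mul (c := C) hmeas (Eventually.of_forall fun t => hC (X - t))
    unfold ConvolutionExistsAt
    simp only [ContinuousLinearMap.mul_apply']
    exact this.congr (Eventually.of_forall fun t => mul_comm _ _)
  have assoc := MeasureTheory.convolution_assoc L L L L
    (fun x y z => mul_assoc x y z) (x₀ := X)
    hKα.aestronglyMeasurable hKβ.aestronglyMeasurable hGint.aestronglyMeasurable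
    hfg hgk hfgk
  have hKK0 : ∀ t, t ≤ (0:ℝ) →
      MeasureTheory.convolution (rlKer α X) (rlKer β X) L volume t = 0 :=
    fun t ht => conv_zero_of_nonpos (X := X) _ _ hKα0 hKβ0 ht
  have hKG0 : ∀ t, t ≤ (0:ℝ) →
      MeasureTheory.convolution (rlKer β X) G L volume t = 0 :=
    fun t ht => conv_zero_of_nonpos (X := X) _ _ hKβ0 hG0 ht
  have hLHS : MeasureTheory.convolution
      (MeasureTheory.convolution (rlKer α X) (rlKer β X) L volume) G L volume X
      = Real.Gamma α * Real.Gamma β / Real.Gamma (α + β)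
        * ∫ v in (0:ℝ)..X, (X - v) ^ (α + β - 1) * g v := by
    rw [conv_eval X _ _ hKK0 hG0]
    have e1 : ∫ t in Set.Ioo (0:ℝ) X,
        MeasureTheory.convolution (rlKer α X) (rlKer β X) L volume t * G (X - t)
        = ∫ t in Set.Ioo (0:ℝ) X,
          Real.Gamma α * Real.Gamma β / Real.Gamma (α + β)
            * (t ^ (α + β - 1) * g (X - t)) := by
      refine MeasureTheory.setIntegral_congr_fun measurableSet_Ioo (fun t ht => ?_)
      rw [caseB hα hβ ⟨ht.1, ht.2.le⟩, hGdef,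
        Set.indicator_of_mem (show X - t ∈ Set.Ioc (0:ℝ) X from
          ⟨by linarith [ht.2], by linarith [ht.1]⟩) g]
      ring
    rw [e1, MeasureTheory.integral_const_mul, ← MeasureTheory.integral_Ioc_eq_integral_Ioo,
      ← intervalIntegral.integral_of_le hX.le]
    congr 1
    rw [← flip_int X (fun v => (X - v) ^ (α + β - 1) * g v)]
    exact intervalIntegral.integral_congr fun t ht => by simp [sub_sub_cancel]
  have hRHS : MeasureTheory.convolution (rlKer α X)
      (MeasureTheory.convolution (rlKer β X) G L volume) L volume X
      = ∫ v in (0:ℝ)..X, (X - v) ^ (α - 1) * ∫ w in (0:ℝ)..v, (v - w) ^ (β - 1) * g w := by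
    rw [conv_eval X _ _ hKα0 hKG0]
    have e1 : ∫ t in Set.Ioo (0:ℝ) X,
        rlKer α X t * MeasureTheory.convolution (rlKer β X) G L volume (X - t)
        = ∫ t in Set.Ioo (0:ℝ) X,
          t ^ (α - 1) * ∫ w in (0:ℝ)..(X - t), (X - t - w) ^ (β - 1) * g w := by
      refine MeasureTheory.setIntegral_congr_fun measurableSet_Ioo (fun t ht => ?_)
      rw [ker_eq ⟨ht.1, ht.2.le⟩, hGdef, caseA g (by linarith [ht.2]) (by linarith [ht.1])]
    rw [e1, ← MeasureTheory.integral_Ioc_eq_integral_Ioo,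
      ← intervalIntegral.integral_of_le hX.le,
      ← flip_int X (fun v => (X - v) ^ (α - 1) * ∫ w in (0:ℝ)..v, (v - w) ^ (β - 1) * g w)]
    exact intervalIntegral.integral_congr fun t ht => by simp [sub_sub_cancel]
  rw [← hRHS, ← assoc, hLHS]


lemma rpow_image {ρ a t : ℝ} (hρ : 0 < ρ) (ha : 0 < a) (hat : a ≤ t) :
    (fun s => s ^ ρ) '' Set.Ioo a t = Set.Ioo (a ^ ρ) (t ^ ρ) := by
  ext x
  constructor
  · rintro ⟨s, hs, rfl⟩
    exact ⟨Real.rpow_lt_rpow ha.le hs.1 hρ,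
      Real.rpow_lt_rpow (by linarith [hs.1]) hs.2 hρ⟩
  · intro hx
    have hx0 : 0 < x := lt_trans (Real.rpow_pos_of_pos ha ρ) hx.1
    refine ⟨x ^ ρ⁻¹, ⟨?_, ?_⟩, Real.rpow_inv_rpow hx0.le hρ.ne'⟩
    · have := Real.rpow_lt_rpow (Real.rpow_pos_of_pos ha ρ).le hx.1 (inv_pos.mpr hρ)
      rwa [Real.rpow_rpow_inv ha.le hρ.ne'] at this
    · have ht0 : 0 < t := lt_of_lt_of_le ha hat
      have := Real.rpow_lt_rpow hx0.le hx.2 (inv_pos.mpr hρ)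
      rwa [Real.rpow_rpow_inv ht0.le hρ.ne'] at this

lemma subst_rpow {ρ a t : ℝ} (hρ : 0 < ρ) (ha : 0 < a) (hat : a ≤ t) (H : ℝ → ℝ) :
    ∫ s in Set.Ioo a t, (ρ * s ^ (ρ - 1)) * H (s ^ ρ)
      = ∫ x in Set.Ioo (a ^ ρ) (t ^ ρ), H x := by
  rw [← rpow_image hρ ha hat]
  rw [MeasureTheory.integral_image_eq_integral_abs_deriv_smul measurableSet_Ioo
    (f' := fun s => ρ * s ^ (ρ - 1))
    (fun x hx => (Real.hasDerivAt_rpow_const (p := ρ)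
      (Or.inl (ne_of_gt (lt_trans ha hx.1)))).hasDerivWithinAt)
    (fun x hx y hy hxy => by
      have h1 : (0:ℝ) < x := lt_trans ha hx.1
      have h2 : (0:ℝ) < y := lt_trans ha hy.1
      have := congrArg (fun z => z ^ ρ⁻¹) hxy
      simpa [Real.rpow_rpow_inv h1.le hρ.ne', Real.rpow_rpow_inv h2.le hρ.ne'] using this) H]
  refine MeasureTheory.setIntegral_congr_fun measurableSet_Ioo (fun s hs => ?_)
  have hs0 : 0 < s := lt_trans ha hs.1
  rw [abs_of_pos (by positivity)]
  simp [smul_eq_mul]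

lemma subI_eq (σ ρ γ a : ℝ) (hρ : 0 < ρ) (ha : 0 < a) (ψ : ℝ → ℝ) (t : ℝ) (hat : a ≤ t) :
    subI σ ρ γ a ψ t = (1 / Real.Gamma γ) *
      ∫ v in (0:ℝ)..(t ^ ρ - a ^ ρ),
        (t ^ ρ - a ^ ρ - v) ^ (γ - 1) * Real.exp (-σ * (t ^ ρ - a ^ ρ - v))
          * ψ ((v + a ^ ρ) ^ ρ⁻¹) := by
  have hct : a ^ ρ ≤ t ^ ρ := Real.rpow_le_rpow ha.le hat hρ.le
  rw [subI, intervalIntegral.integral_of_le hat, MeasureTheory.integral_Ioc_eq_integral_Ioo]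
  have e1 : ∀ s ∈ Set.Ioo a t,
      s ^ (ρ - 1) * (t ^ ρ - s ^ ρ) ^ (γ - 1) * Real.exp (-σ * (t ^ ρ - s ^ ρ)) * ψ s
        = (1 / ρ) * ((ρ * s ^ (ρ - 1)) *
          ((fun x => (t ^ ρ - x) ^ (γ - 1) * Real.exp (-σ * (t ^ ρ - x)) * ψ (x ^ ρ⁻¹))
            (s ^ ρ))) := by
    intro s hs
    have hs0 : 0 < s := lt_trans ha hs.1
    simp only
    rw [Real.rpow_rpow_inv hs0.le hρ.ne']
    field_simp
  rw [MeasureTheory.setIntegral_congr_fun measurableSet_Ioo e1, MeasureTheory.integral_const_mul,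
    subst_rpow hρ ha hat
      (fun x => (t ^ ρ - x) ^ (γ - 1) * Real.exp (-σ * (t ^ ρ - x)) * ψ (x ^ ρ⁻¹)),
    ← MeasureTheory.integral_Ioc_eq_integral_Ioo,
    ← intervalIntegral.integral_of_le hct]
  have e2 := intervalIntegral.integral_comp_add_right (a := (0:ℝ)) (b := t ^ ρ - a ^ ρ)
    (fun x => (t ^ ρ - x) ^ (γ - 1) * Real.exp (-σ * (t ^ ρ - x)) * ψ (x ^ ρ⁻¹)) (a ^ ρ)
  rw [zero_add, sub_add_cancel] at e2
  rw [← e2]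
  have e3 : ∀ v ∈ Set.uIcc (0:ℝ) (t ^ ρ - a ^ ρ),
      (fun x => (t ^ ρ - x) ^ (γ - 1) * Real.exp (-σ * (t ^ ρ - x)) * ψ (x ^ ρ⁻¹)) (v + a ^ ρ)
        = (t ^ ρ - a ^ ρ - v) ^ (γ - 1) * Real.exp (-σ * (t ^ ρ - a ^ ρ - v))
          * ψ ((v + a ^ ρ) ^ ρ⁻¹) := by
    intro v _
    simp only
    rw [show t ^ ρ - (v + a ^ ρ) = t ^ ρ - a ^ ρ - v by ring]
  rw [intervalIntegral.integral_congr e3]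
  rw [div_mul_eq_mul_div, one_div, mul_comm (1 / Real.Gamma γ)]
  field_simp
  congr 1
  exact intervalIntegral.integral_congr fun v _ => by ring

set_option maxHeartbeats 1000000 in
theorem stmt5 (σ ρ α β a b : ℝ) (hρ : 0 < ρ) (hα : 0 < α) (hβ : 0 < β)
    (ha : 0 < a) (hab : a < b)
    (ψ : ℝ → ℝ) (hψ : ContinuousOn ψ (Set.Icc a b)) :
    ∀ t ∈ Set.Icc a b,
      subI σ ρ α a (subI σ ρ β a ψ) t = subI σ ρ (α + β) a ψ t := by
  intro t ht
  obtain ⟨hat, htb⟩ := ht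
  rcases eq_or_lt_of_le hat with rfl | hat'
  · simp [subI]
  · have haρ : (0:ℝ) < a ^ ρ := Real.rpow_pos_of_pos ha ρ
    have hct : a ^ ρ < t ^ ρ := Real.rpow_lt_rpow ha.le hat' hρ
    have hX : (0:ℝ) < t ^ ρ - a ^ ρ := sub_pos.mpr hct
    have hΓα := Real.Gamma_pos_of_pos hα
    have hΓβ := Real.Gamma_pos_of_pos hβ
    have hΓαβ := Real.Gamma_pos_of_pos (by linarith : (0:ℝ) < α + β)
    rw [subI_eq σ ρ α a hρ ha _ t hat, subI_eq σ ρ (α + β) a hρ ha ψ t hat]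
    have hgc : ContinuousOn
        (fun w => Real.exp (-σ * (t ^ ρ - a ^ ρ - w)) * ψ ((w + a ^ ρ) ^ ρ⁻¹))
        (Set.Icc 0 (t ^ ρ - a ^ ρ)) := by
      refine ContinuousOn.mul (Real.continuous_exp.comp (by continuity)).continuousOn ?_
      refine hψ.comp (ContinuousOn.rpow_const ?_ ?_) ?_
      · exact (continuous_id.add continuous_const).continuousOn
      · intro w hw
        exact Or.inl (by nlinarith [hw.1])
      · intro w hw
        have h1 : a ^ ρ ≤ w + a ^ ρ := by linarith [hw.1]
        have h2 : w + a ^ ρ ≤ t ^ ρ := by linarith [hw.2]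
        constructor
        · have := Real.rpow_le_rpow haρ.le h1 (inv_pos.mpr hρ).le
          rwa [Real.rpow_rpow_inv ha.le hρ.ne'] at this
        · have := Real.rpow_le_rpow (by linarith : (0:ℝ) ≤ w + a ^ ρ) h2
            (inv_pos.mpr hρ).le
          rw [Real.rpow_rpow_inv (by linarith : (0:ℝ) ≤ t) hρ.ne'] at this
          linarith
    have key : ∀ v ∈ Set.uIcc (0:ℝ) (t ^ ρ - a ^ ρ),
        (t ^ ρ - a ^ ρ - v) ^ (α - 1) * Real.exp (-σ * (t ^ ρ - a ^ ρ - v))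
            * subI σ ρ β a ψ ((v + a ^ ρ) ^ ρ⁻¹)
          = (1 / Real.Gamma β) * ((t ^ ρ - a ^ ρ - v) ^ (α - 1)
            * ∫ w in (0:ℝ)..v, (v - w) ^ (β - 1)
              * (Real.exp (-σ * (t ^ ρ - a ^ ρ - w)) * ψ ((w + a ^ ρ) ^ ρ⁻¹))) := by
      intro v hv
      rw [Set.uIcc_of_le hX.le] at hv
      have hvc0 : (0:ℝ) < v + a ^ ρ := by linarith [hv.1]
      have hat2 : a ≤ (v + a ^ ρ) ^ ρ⁻¹ := by
        have := Real.rpow_le_rpow haρ.le (by linarith [hv.1] : a ^ ρ ≤ v + a ^ ρ)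
          (inv_pos.mpr hρ).le
        rwa [Real.rpow_rpow_inv ha.le hρ.ne'] at this
      rw [subI_eq σ ρ β a hρ ha ψ _ hat2, Real.rpow_inv_rpow hvc0.le hρ.ne']
      simp only [add_sub_cancel_right]
      have e6 : ∫ w in (0:ℝ)..v, (v - w) ^ (β - 1) * Real.exp (-σ * (v - w))
            * ψ ((w + a ^ ρ) ^ ρ⁻¹)
          = Real.exp (σ * (t ^ ρ - a ^ ρ - v)) * ∫ w in (0:ℝ)..v, (v - w) ^ (β - 1)
            * (Real.exp (-σ * (t ^ ρ - a ^ ρ - w)) * ψ ((w + a ^ ρ) ^ ρ⁻¹)) := by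
        rw [← intervalIntegral.integral_const_mul]
        refine intervalIntegral.integral_congr fun w _ => ?_
        rw [show -σ * (v - w)
          = σ * (t ^ ρ - a ^ ρ - v) + -σ * (t ^ ρ - a ^ ρ - w) by ring, Real.exp_add]
        ring
      rw [e6]
      have e7 : Real.exp (-σ * (t ^ ρ - a ^ ρ - v))
          * Real.exp (σ * (t ^ ρ - a ^ ρ - v)) = 1 := by
        rw [← Real.exp_add, show -σ * (t ^ ρ - a ^ ρ - v)
          + σ * (t ^ ρ - a ^ ρ - v) = (0:ℝ) by ring, Real.exp_zero]
      calc (t ^ ρ - a ^ ρ - v) ^ (α - 1) * Real.exp (-σ * (t ^ ρ - a ^ ρ - v))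
            * (1 / Real.Gamma β * (Real.exp (σ * (t ^ ρ - a ^ ρ - v))
              * ∫ w in (0:ℝ)..v, (v - w) ^ (β - 1)
                * (Real.exp (-σ * (t ^ ρ - a ^ ρ - w)) * ψ ((w + a ^ ρ) ^ ρ⁻¹))))
          = (Real.exp (-σ * (t ^ ρ - a ^ ρ - v)) * Real.exp (σ * (t ^ ρ - a ^ ρ - v)))
            * (1 / Real.Gamma β * ((t ^ ρ - a ^ ρ - v) ^ (α - 1)
              * ∫ w in (0:ℝ)..v, (v - w) ^ (β - 1)
                * (Real.exp (-σ * (t ^ ρ - a ^ ρ - w)) * ψ ((w + a ^ ρ) ^ ρ⁻¹)))) := by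
            ring
        _ = _ := by rw [e7, one_mul]
    rw [intervalIntegral.integral_congr key, intervalIntegral.integral_const_mul]
    have hRL := RL0 hα hβ hX
      (fun w => Real.exp (-σ * (t ^ ρ - a ^ ρ - w)) * ψ ((w + a ^ ρ) ^ ρ⁻¹)) hgc
    rw [hRL]
    have e8 : ∫ v in (0:ℝ)..(t ^ ρ - a ^ ρ), (t ^ ρ - a ^ ρ - v) ^ (α + β - 1)
          * (Real.exp (-σ * (t ^ ρ - a ^ ρ - v)) * ψ ((v + a ^ ρ) ^ ρ⁻¹))
        = ∫ v in (0:ℝ)..(t ^ ρ - a ^ ρ), (t ^ ρ - a ^ ρ - v) ^ (α + β - 1)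
          * Real.exp (-σ * (t ^ ρ - a ^ ρ - v)) * ψ ((v + a ^ ρ) ^ ρ⁻¹) :=
      intervalIntegral.integral_congr fun v _ => (mul_assoc _ _ _).symm
    rw [e8]
    field_simp
    ring_nf
    exact intervalIntegral.integral_congr fun v _ => by ring
end

section
/- Let σ ∈ ℝ, ρ > 0, α > 0 with m − 1 < α ≤ m, and 0 < a < b. If ψ : ℝ → ℝ is m-times continuously differentiable on [a,b], then for all t ∈ [a,b], the Caputo-type generalized substantial fractional derivative satisfies (σ^cD_a^{α,ρ} ψ)(t) = e^{-σ t^ρ} · (^cD_a^{α,ρ} (s ↦ e^{σ s^ρ} ψ(s)))(t), where ^cD_a^{α,ρ} φ = I_a^{m-α,ρ}(D^{m,ρ} φ) is the Caputo-type Katugampola fractional derivative. -/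
open Real MeasureTheory Set Filter

lemma subD_exp_eq (σ ρ : ℝ) (hρ : ρ ≠ 0) (g : ℝ → ℝ) (s : ℝ) (hs : 0 < s)
    (hg : DifferentiableAt ℝ g s) :
    subD σ ρ (fun u => Real.exp (-σ * u ^ ρ) * g u) s
      = Real.exp (-σ * s ^ ρ) * subD 0 ρ g s := by
  have h1 : HasDerivAt (fun u : ℝ => u ^ ρ) (ρ * s ^ (ρ - 1)) s :=
    Real.hasDerivAt_rpow_const (Or.inl hs.ne')
  have h2 : HasDerivAt (fun u : ℝ => Real.exp (-σ * u ^ ρ))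
      (Real.exp (-σ * s ^ ρ) * (-σ * (ρ * s ^ (ρ - 1)))) s := by
    have := ((h1.const_mul (-σ)).exp)
    convert this using 1
  have h3 : HasDerivAt (fun u => Real.exp (-σ * u ^ ρ) * g u)
      (Real.exp (-σ * s ^ ρ) * (-σ * (ρ * s ^ (ρ - 1))) * g s
        + Real.exp (-σ * s ^ ρ) * deriv g s) s :=
    h2.mul hg.hasDerivAt
  have hpow : s ^ (1 - ρ) * s ^ (ρ - 1) = 1 := by
    rw [← Real.rpow_add hs]; norm_num
  simp only [subD, h3.deriv]
  simp only [neg_mul]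
  field_simp
  linear_combination (-(σ * ρ * g s)) * hpow

lemma iter_claim (σ ρ : ℝ) (hρ : ρ ≠ 0) (S : Set ℝ) (hS : IsOpen S)
    (hpos : ∀ s ∈ S, (0:ℝ) < s) :
    ∀ (k : ℕ) (g f : ℝ → ℝ), ContDiffOn ℝ k g S →
      Set.EqOn f (fun s => Real.exp (-σ * s ^ ρ) * g s) S →
      Set.EqOn ((subD σ ρ)^[k] f)
        (fun s => Real.exp (-σ * s ^ ρ) * (subD 0 ρ)^[k] g s) S := by
  intro k
  induction k with
  | zero => intro g f _ hfg; simpa using hfg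
  | succ k ih =>
    intro g f hg hfg
    have hg1 : ContDiffOn ℝ 1 g S := hg.of_le (by exact_mod_cast Nat.one_le_iff_ne_zero.mpr (Nat.succ_ne_zero k))
    have hdg : ContDiffOn ℝ k (deriv g) S :=
      hg.deriv_of_isOpen hS (by exact_mod_cast le_rfl)
    have hg' : ContDiffOn ℝ k (subD 0 ρ g) S := by
      have h1 : ContDiffOn ℝ k (fun t : ℝ => t ^ (1 - ρ) / ρ * deriv g t) S := by
        apply ContDiffOn.mul _ hdg
        intro x hx
        exact ((Real.contDiffAt_rpow_const_of_ne (hpos x hx).ne').div_const ρ).contDiffWithinAt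
      have : subD 0 ρ g = fun t : ℝ => t ^ (1 - ρ) / ρ * deriv g t := by
        funext t; simp [subD]
      rw [this]; exact h1
    have key : Set.EqOn (subD σ ρ f) (fun s => Real.exp (-σ * s ^ ρ) * subD 0 ρ g s) S := by
      intro s hs
      have hgd : DifferentiableAt ℝ g s :=
        (hg1.contDiffAt (hS.mem_nhds hs)).differentiableAt one_ne_zero
      have heq : f =ᶠ[nhds s] fun u => Real.exp (-σ * u ^ ρ) * g u :=
        Filter.eventuallyEq_of_mem (hS.mem_nhds hs) hfg
      have h4 : subD σ ρ f s = subD σ ρ (fun u => Real.exp (-σ * u ^ ρ) * g u) s := by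
        simp only [subD, heq.deriv_eq, heq.eq_of_nhds]
      rw [h4]
      exact subD_exp_eq σ ρ hρ g s (hpos s hs) hgd
    intro s hs
    rw [Function.iterate_succ_apply, Function.iterate_succ_apply]
    exact ih (subD 0 ρ g) (subD σ ρ f) hg' key hs

theorem stmt10 (σ ρ α a b : ℝ) (hρ : 0 < ρ) (hα : 0 < α) (ha : 0 < a) (hab : a < b)
    (m : ℕ) (hα₁ : (m : ℝ) - 1 < α) (hα₂ : α ≤ m)
    (ψ : ℝ → ℝ) (hψ : ContDiffOn ℝ m ψ (Set.Icc a b)) :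
    ∀ t ∈ Set.Icc a b,
      subI σ ρ ((m : ℝ) - α) a ((subD σ ρ)^[m] ψ) t =
        Real.exp (-σ * t ^ ρ) *
          katI ρ ((m : ℝ) - α) a ((subD 0 ρ)^[m] (fun s => Real.exp (σ * s ^ ρ) * ψ s)) t := by
  intro t ht
  obtain ⟨hat, htb⟩ := ht
  set φ : ℝ → ℝ := fun u => Real.exp (σ * u ^ ρ) * ψ u with hφ
  have hpos : ∀ s ∈ Set.Ioo a b, (0:ℝ) < s := fun s hs => ha.trans hs.1
  have hφc : ContDiffOn ℝ m φ (Set.Ioo a b) := by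
    apply ContDiffOn.mul _ (hψ.mono Set.Ioo_subset_Icc_self)
    intro x hx
    exact ((contDiffAt_const.mul
      (Real.contDiffAt_rpow_const_of_ne (hpos x hx).ne')).exp).contDiffWithinAt
  have hfg : Set.EqOn ψ (fun s => Real.exp (-σ * s ^ ρ) * φ s) (Set.Ioo a b) := by
    intro s _
    simp only [hφ]
    rw [← mul_assoc, ← Real.exp_add, show -σ * s ^ ρ + σ * s ^ ρ = 0 by ring,
      Real.exp_zero, one_mul]
  have hkey := iter_claim σ ρ hρ.ne' (Set.Ioo a b) isOpen_Ioo hpos m φ ψ hφc hfg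
  simp only [subI, katI]
  have hIeq : (∫ s in a..t, s ^ (ρ-1) * (t^ρ - s^ρ) ^ ((m:ℝ) - α - 1) *
        Real.exp (-σ * (t^ρ - s^ρ)) * ((subD σ ρ)^[m] ψ) s)
      = ∫ s in a..t, Real.exp (-σ * t ^ ρ) *
          (s ^ (ρ-1) * (t^ρ - s^ρ) ^ ((m:ℝ)-α-1) * ((subD 0 ρ)^[m] φ) s) := by
    apply intervalIntegral.integral_congr_ae
    have hne : ∀ᵐ x : ℝ, x ≠ t := by
      rw [Filter.eventually_iff, mem_ae_iff]
      simpa using measure_singleton t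
    filter_upwards [hne] with x hx hxI
    rw [Set.uIoc_of_le hat] at hxI
    have hxab : x ∈ Set.Ioo a b := ⟨hxI.1, lt_of_lt_of_le (lt_of_le_of_ne hxI.2 hx) htb⟩
    have hexp : Real.exp (-σ * (t^ρ - x^ρ)) * Real.exp (-σ * x^ρ) = Real.exp (-σ * t^ρ) := by
      rw [← Real.exp_add]; congr 1; ring
    have hk := hkey hxab
    simp only at hk
    rw [hk]
    linear_combination (x ^ (ρ-1) * (t^ρ - x^ρ) ^ ((m:ℝ)-α-1) * ((subD 0 ρ)^[m] φ) x) * hexp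
  rw [hIeq, intervalIntegral.integral_const_mul]
  ring
end

section
/- Let σ > 0, ρ > 0, α > 0 with m = ⌈α⌉, and let b_0, …, b_{m-1} ∈ ℝ, K > 0, h* > 0. Let H = { (t, y) : 0 ≤ t ≤ h*, |y − e^{-σ t^ρ} Σ_{k=0}^{m-1} (b_k/k!) t^{ρk}| ≤ K }, and let f : H → ℝ be continuous with |f(t,y)| ≤ M on H and |f(t,y₁) − f(t,y₂)| ≤ L|y₁ − y₂| for all (t,y₁), (t,y₂) ∈ H. Let h > 0 satisfy h ≤ h*, L h^{ρα} < Γ(α+1), and M h^{ρα} ≤ Γ(α+1) K. Then there exists a unique continuous function ψ : [0,h] → ℝ satisfying the Volterra equation ψ(t) = e^{-σ t^ρ} Σ_{k=0}^{m-1} (b_k/k!) t^{ρk} + (ρ/Γ(α)) ∫_0^t s^{ρ-1} (t^ρ − s^ρ)^{α-1} e^{-σ(t^ρ − s^ρ)} f(s, ψ(s)) ds for all t ∈ [0,h]. -/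
open Real MeasureTheory Set Filter
open Topology intervalIntegral

-- integrability of the flipped kernel times a continuous function
lemma st18_integrable (α : ℝ) (hα : 0 < α) (ζ : ℝ → ℝ) (a b : ℝ)
    (hζ : ContinuousOn ζ (Set.uIcc a b)) :
    IntervalIntegrable (fun v => v ^ (α - 1) * ζ v) volume a b :=
  (intervalIntegrable_rpow' (by linarith)).mul_continuousOn hζ

-- flip: ∫_0^x (x-u)^{α-1} ζ u du = ∫_0^x v^{α-1} ζ (x - v) dv
lemma st18_flip (α : ℝ) (x : ℝ) (ζ : ℝ → ℝ) :
    (∫ u in (0:ℝ)..x, (x - u) ^ (α - 1) * ζ u)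
      = ∫ v in (0:ℝ)..x, v ^ (α - 1) * ζ (x - v) := by
  have := intervalIntegral.integral_comp_sub_left
      (f := fun v => v ^ (α - 1) * ζ (x - v)) (a := 0) (b := x) x
  simp only [sub_sub_cancel, sub_zero, sub_self] at this
  exact this

-- value of ∫ v^{α-1}
lemma st18_integral_rpow (α : ℝ) (hα : 0 < α) (a b : ℝ) :
    (∫ v in a..b, v ^ (α - 1)) = (b ^ α - a ^ α) / α := by
  rw [integral_rpow (Or.inl (by linarith))]
  norm_num

-- generic bound
lemma st18_bound_gen (α : ℝ) (hα : 0 < α) (a b : ℝ) (ha : 0 ≤ a) (hab : a ≤ b)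
    (W : ℝ → ℝ) (hW : ContinuousOn W (Set.uIcc a b)) (D : ℝ) (hD : 0 ≤ D)
    (hbd : ∀ v ∈ Icc a b, |W v| ≤ D) :
    |∫ v in a..b, v ^ (α - 1) * W v| ≤ D * (b ^ α - a ^ α) / α := by
  have hint : IntervalIntegrable (fun v => v ^ (α - 1) * W v) volume a b :=
    st18_integrable α hα W a b hW
  have h1 : |∫ v in a..b, v ^ (α - 1) * W v| ≤ ∫ v in a..b, |v ^ (α - 1) * W v| :=
    intervalIntegral.abs_integral_le_integral_abs hab
  have h2 : (∫ v in a..b, |v ^ (α - 1) * W v|) ≤ ∫ v in a..b, v ^ (α - 1) * D := by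
    apply intervalIntegral.integral_mono_on hab hint.abs
      ((intervalIntegrable_rpow' (by linarith)).mul_const D)
    intro v hv
    rw [abs_mul, abs_of_nonneg (Real.rpow_nonneg (le_trans ha hv.1) _)]
    exact mul_le_mul_of_nonneg_left (hbd v hv) (Real.rpow_nonneg (le_trans ha hv.1) _)
  have h3 : (∫ v in a..b, v ^ (α - 1) * D) = (b ^ α - a ^ α) / α * D := by
    rw [intervalIntegral.integral_mul_const, st18_integral_rpow α hα]
  calc |∫ v in a..b, v ^ (α - 1) * W v| ≤ (b ^ α - a ^ α) / α * D := by
        rw [← h3]; exact le_trans h1 h2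
    _ = D * (b ^ α - a ^ α) / α := by ring

-- bound on the convolution-form integral
lemma st18_bound_conv (α : ℝ) (hα : 0 < α) (x : ℝ) (hx : 0 ≤ x)
    (ζ : ℝ → ℝ) (hζ : ContinuousOn ζ (Icc 0 x)) (D : ℝ) (hD : 0 ≤ D)
    (hbd : ∀ u ∈ Icc 0 x, |ζ u| ≤ D) :
    |∫ u in (0:ℝ)..x, (x - u) ^ (α - 1) * ζ u| ≤ D * x ^ α / α := by
  rw [st18_flip]
  have hWc : ContinuousOn (fun v => ζ (x - v)) (Set.uIcc 0 x) := by
    apply hζ.comp (continuous_const.sub continuous_id).continuousOn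
    intro v hv
    rw [Set.uIcc_of_le hx] at hv
    show x - v ∈ Icc 0 x
    exact ⟨by linarith [hv.2], by linarith [hv.1]⟩
  have := st18_bound_gen α hα 0 x le_rfl hx (fun v => ζ (x - v))
    hWc D hD ?_
  · simpa [Real.zero_rpow hα.ne'] using this
  · intro v hv
    exact hbd (x - v) ⟨by simp [hv.2], by simp [hv.1]⟩

-- two-point difference estimate
lemma st18_Jdiff (α : ℝ) (hα : 0 < α) (ζ : ℝ → ℝ) (hζ : Continuous ζ)
    (x₁ x₂ : ℝ) (h1 : 0 ≤ x₁) (h12 : x₁ ≤ x₂)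
    (C ε₁ : ℝ) (hC : 0 ≤ C) (hε₁ : 0 ≤ ε₁)
    (hbd : ∀ u ∈ Icc 0 x₂, |ζ u| ≤ C)
    (huc : ∀ v ∈ Icc 0 x₁, |ζ (x₂ - v) - ζ (x₁ - v)| ≤ ε₁) :
    |(∫ u in (0:ℝ)..x₂, (x₂ - u) ^ (α - 1) * ζ u)
      - ∫ u in (0:ℝ)..x₁, (x₁ - u) ^ (α - 1) * ζ u|
      ≤ ε₁ * x₁ ^ α / α + C * (x₂ ^ α - x₁ ^ α) / α := by
  rw [st18_flip, st18_flip]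
  have i1 : IntervalIntegrable (fun v => v ^ (α - 1) * ζ (x₂ - v)) volume 0 x₁ :=
    st18_integrable α hα _ 0 x₁ (hζ.comp (continuous_const.sub continuous_id)).continuousOn
  have i2 : IntervalIntegrable (fun v => v ^ (α - 1) * ζ (x₂ - v)) volume x₁ x₂ :=
    st18_integrable α hα _ x₁ x₂ (hζ.comp (continuous_const.sub continuous_id)).continuousOn
  have i3 : IntervalIntegrable (fun v => v ^ (α - 1) * ζ (x₁ - v)) volume 0 x₁ :=
    st18_integrable α hα _ 0 x₁ (hζ.comp (continuous_const.sub continuous_id)).continuousOn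
  have hsplit : (∫ v in (0:ℝ)..x₂, v ^ (α - 1) * ζ (x₂ - v))
      = (∫ v in (0:ℝ)..x₁, v ^ (α - 1) * ζ (x₂ - v))
        + ∫ v in x₁..x₂, v ^ (α - 1) * ζ (x₂ - v) :=
    (intervalIntegral.integral_add_adjacent_intervals i1 i2).symm
  rw [hsplit]
  have hsub : (∫ v in (0:ℝ)..x₁, v ^ (α - 1) * ζ (x₂ - v))
      - (∫ v in (0:ℝ)..x₁, v ^ (α - 1) * ζ (x₁ - v))
      = ∫ v in (0:ℝ)..x₁, v ^ (α - 1) * (ζ (x₂ - v) - ζ (x₁ - v)) := by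
    rw [← intervalIntegral.integral_sub i1 i3]
    congr 1; ext v; ring
  have e1 : |∫ v in (0:ℝ)..x₁, v ^ (α - 1) * (ζ (x₂ - v) - ζ (x₁ - v))|
      ≤ ε₁ * x₁ ^ α / α := by
    have := st18_bound_gen α hα 0 x₁ le_rfl h1
      (fun v => ζ (x₂ - v) - ζ (x₁ - v))
      ((hζ.comp (continuous_const.sub continuous_id)).sub
        (hζ.comp (continuous_const.sub continuous_id))).continuousOn ε₁ hε₁ huc
    simpa [Real.zero_rpow hα.ne'] using this
  have e2 : |∫ v in x₁..x₂, v ^ (α - 1) * ζ (x₂ - v)|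
      ≤ C * (x₂ ^ α - x₁ ^ α) / α := by
    apply st18_bound_gen α hα x₁ x₂ h1 h12 _
      (hζ.comp (continuous_const.sub continuous_id)).continuousOn C hC
    intro v hv
    exact hbd (x₂ - v) ⟨by simp [hv.2], by simp [le_trans h1 hv.1]⟩
  calc |(∫ v in (0:ℝ)..x₁, v ^ (α - 1) * ζ (x₂ - v))
        + (∫ v in x₁..x₂, v ^ (α - 1) * ζ (x₂ - v))
        - ∫ v in (0:ℝ)..x₁, v ^ (α - 1) * ζ (x₁ - v)|
      ≤ |(∫ v in (0:ℝ)..x₁, v ^ (α - 1) * ζ (x₂ - v))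
          - ∫ v in (0:ℝ)..x₁, v ^ (α - 1) * ζ (x₁ - v)|
        + |∫ v in x₁..x₂, v ^ (α - 1) * ζ (x₂ - v)| := by
        rw [add_sub_right_comm]; exact abs_add_le _ _
    _ ≤ ε₁ * x₁ ^ α / α + C * (x₂ ^ α - x₁ ^ α) / α := by
        rw [hsub] at *; exact add_le_add e1 e2

-- continuity of the convolution-form integral
lemma st18_cont (α : ℝ) (hα : 0 < α) (ζ : ℝ → ℝ) (hζ : Continuous ζ)
    (X : ℝ) (hX : 0 ≤ X) :
    ContinuousOn (fun x => ∫ u in (0:ℝ)..x, (x - u) ^ (α - 1) * ζ u) (Icc 0 X) := by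
  obtain ⟨C, hC⟩ := isCompact_Icc.exists_bound_of_continuousOn
    (hζ.continuousOn (s := Icc (0:ℝ) X))
  have hC0 : 0 ≤ C := le_trans (norm_nonneg _) (hC 0 ⟨le_rfl, hX⟩)
  have hucζ : UniformContinuousOn ζ (Icc 0 X) :=
    isCompact_Icc.uniformContinuousOn_of_continuous hζ.continuousOn
  have hucp : UniformContinuousOn (fun x : ℝ => x ^ α) (Icc 0 X) :=
    isCompact_Icc.uniformContinuousOn_of_continuous
      (continuousOn_id.rpow_const fun _ _ => Or.inr hα.le)
  rw [Metric.continuousOn_iff]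
  intro x hx ε hε
  set ε₁ := ε * α / (2 * (X ^ α + 1)) with hε₁def
  set ε₂ := ε * α / (2 * (C + 1)) with hε₂def
  have hXα : 0 ≤ X ^ α := Real.rpow_nonneg hX α
  have hε₁pos : 0 < ε₁ := by positivity
  have hε₂pos : 0 < ε₂ := by positivity
  obtain ⟨δ₁, hδ₁pos, hδ₁⟩ := Metric.uniformContinuousOn_iff.1 hucζ ε₁ hε₁pos
  obtain ⟨δ₂, hδ₂pos, hδ₂⟩ := Metric.uniformContinuousOn_iff.1 hucp ε₂ hε₂pos
  refine ⟨min δ₁ δ₂, lt_min hδ₁pos hδ₂pos, ?_⟩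
  intro y hy hdist
  set x₁ := min x y with hx₁def
  set x₂ := max x y with hx₂def
  have hx₁ : x₁ ∈ Icc 0 X := ⟨le_min hx.1 hy.1, le_trans (min_le_left _ _) hx.2⟩
  have hx₂ : x₂ ∈ Icc 0 X := ⟨le_trans hx₁.1 (min_le_max), max_le hx.2 hy.2⟩
  have h12 : x₁ ≤ x₂ := min_le_max
  have hd : x₂ - x₁ < min δ₁ δ₂ := by
    rw [Real.dist_eq] at hdist
    rcases le_total x y with hxy | hxy
    · simp only [hx₁def, hx₂def, min_eq_left hxy, max_eq_right hxy]
      exact lt_of_le_of_lt (le_abs_self _) hdist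
    · simp only [hx₁def, hx₂def, min_eq_right hxy, max_eq_left hxy]
      rw [abs_sub_comm] at hdist
      exact lt_of_le_of_lt (le_abs_self _) hdist
  have key : |(∫ u in (0:ℝ)..x₂, (x₂ - u) ^ (α - 1) * ζ u)
      - ∫ u in (0:ℝ)..x₁, (x₁ - u) ^ (α - 1) * ζ u|
      ≤ ε₁ * x₁ ^ α / α + C * (x₂ ^ α - x₁ ^ α) / α := by
    apply st18_Jdiff α hα ζ hζ x₁ x₂ hx₁.1 h12 C ε₁ hC0 hε₁pos.le
    · intro u hu
      exact le_trans (Real.norm_eq_abs _ ▸ hC u ⟨hu.1, le_trans hu.2 hx₂.2⟩) le_rfl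
    · intro v hv
      have m2 : x₂ - v ∈ Icc 0 X :=
        ⟨by linarith [hv.2, h12], by linarith [hv.1, hx₂.2]⟩
      have m1 : x₁ - v ∈ Icc 0 X :=
        ⟨by linarith [hv.2], by linarith [hv.1, hx₁.2]⟩
      have : dist (x₂ - v) (x₁ - v) < δ₁ := by
        rw [Real.dist_eq]
        have : |x₂ - v - (x₁ - v)| = x₂ - x₁ := by
          rw [abs_of_nonneg (by linarith)]; ring
        rw [this]; exact lt_of_lt_of_le hd (min_le_left _ _)
      exact le_of_lt (Real.dist_eq _ _ ▸ hδ₁ _ m2 _ m1 this)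
  have hp : x₂ ^ α - x₁ ^ α ≤ ε₂ := by
    have := hδ₂ _ hx₂ _ hx₁ (by
      rw [Real.dist_eq, abs_of_nonneg (by linarith)]
      exact lt_of_lt_of_le hd (min_le_right _ _))
    rw [Real.dist_eq] at this
    exact le_of_lt (lt_of_le_of_lt (le_abs_self _) this)
  have hx₁α : x₁ ^ α ≤ X ^ α := Real.rpow_le_rpow hx₁.1 hx₁.2 hα.le
  have chain : ε₁ * x₁ ^ α / α + C * (x₂ ^ α - x₁ ^ α) / α
      ≤ ε₁ * X ^ α / α + C * ε₂ / α := by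
    gcongr
  have final : ε₁ * X ^ α / α + C * ε₂ / α < ε := by
    rw [hε₁def, hε₂def]
    have h1 : ε * α / (2 * (X ^ α + 1)) * X ^ α / α < ε / 2 := by
      rw [div_lt_div_iff₀ (by positivity) (by norm_num)]
      have : X ^ α < X ^ α + 1 := by linarith
      calc ε * α / (2 * (X ^ α + 1)) * X ^ α * 2
          = ε * α * X ^ α * 2 / (2 * (X ^ α + 1)) := by ring
        _ < ε * α := by
            rw [div_lt_iff₀ (by positivity)]
            nlinarith
    have h2 : C * (ε * α / (2 * (C + 1))) / α < ε / 2 := by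
      rw [div_lt_div_iff₀ (by positivity) (by norm_num)]
      calc C * (ε * α / (2 * (C + 1))) * 2
          = C * ε * α * 2 / (2 * (C + 1)) := by ring
        _ < ε * α := by
            rw [div_lt_iff₀ (by positivity)]
            nlinarith
    linarith
  have hdxy : dist ((fun x => ∫ u in (0:ℝ)..x, (x - u) ^ (α - 1) * ζ u) y)
      ((fun x => ∫ u in (0:ℝ)..x, (x - u) ^ (α - 1) * ζ u) x)
      = |(∫ u in (0:ℝ)..x₂, (x₂ - u) ^ (α - 1) * ζ u)
          - ∫ u in (0:ℝ)..x₁, (x₁ - u) ^ (α - 1) * ζ u| := by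
    rw [Real.dist_eq]
    rcases le_total x y with hxy | hxy
    · simp only [hx₁def, hx₂def, min_eq_left hxy, max_eq_right hxy]
    · simp only [hx₁def, hx₂def, min_eq_right hxy, max_eq_left hxy]
      rw [abs_sub_comm]
  rw [hdxy]
  exact lt_of_le_of_lt (le_trans key chain) final

-- change of variables u = s^ρ
lemma st18_cov (ρ : ℝ) (hρ : 0 < ρ) (t : ℝ) (ht : 0 ≤ t) (g : ℝ → ℝ) :
    (∫ s in (0:ℝ)..t, ρ * s ^ (ρ - 1) * g (s ^ ρ))
      = ∫ u in (0:ℝ)..(t ^ ρ), g u := by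
  rcases eq_or_lt_of_le ht with rfl | htpos
  · simp [Real.zero_rpow hρ.ne']
  have hmono : StrictMonoOn (fun s : ℝ => s ^ ρ) (Ioc 0 t) :=
    fun a ha b hb hab => Real.rpow_lt_rpow ha.1.le hab hρ
  have hinj : InjOn (fun s : ℝ => s ^ ρ) (Ioc 0 t) := hmono.injOn
  have hderiv : ∀ x ∈ Ioc (0:ℝ) t,
      HasDerivWithinAt (fun s : ℝ => s ^ ρ) (ρ * x ^ (ρ - 1)) (Ioc 0 t) x :=
    fun x hx => (Real.hasDerivAt_rpow_const (Or.inl hx.1.ne')).hasDerivWithinAt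
  have himg : (fun s : ℝ => s ^ ρ) '' Ioc 0 t = Ioc 0 (t ^ ρ) := by
    ext u
    constructor
    · rintro ⟨s, hs, rfl⟩
      exact ⟨Real.rpow_pos_of_pos hs.1 ρ, Real.rpow_le_rpow hs.1.le hs.2 hρ.le⟩
    · intro hu
      refine ⟨u ^ ρ⁻¹, ⟨Real.rpow_pos_of_pos hu.1 ρ⁻¹, ?_⟩, ?_⟩
      · calc u ^ ρ⁻¹ ≤ (t ^ ρ) ^ ρ⁻¹ :=
              Real.rpow_le_rpow hu.1.le hu.2 (inv_nonneg.2 hρ.le)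
          _ = t := Real.rpow_rpow_inv ht hρ.ne'
      · exact Real.rpow_inv_rpow hu.1.le hρ.ne'
  calc (∫ s in (0:ℝ)..t, ρ * s ^ (ρ - 1) * g (s ^ ρ))
      = ∫ s in Ioc 0 t, ρ * s ^ (ρ - 1) * g (s ^ ρ) :=
        intervalIntegral.integral_of_le ht
    _ = ∫ s in Ioc 0 t, |ρ * s ^ (ρ - 1)| • g (s ^ ρ) := by
        apply setIntegral_congr_fun measurableSet_Ioc
        intro s hs
        simp only [smul_eq_mul]
        rw [abs_of_nonneg (show (0:ℝ) ≤ ρ * s ^ (ρ - 1) by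
          have := hs.1; positivity)]
    _ = ∫ u in (fun s : ℝ => s ^ ρ) '' Ioc 0 t, g u :=
        (integral_image_eq_integral_abs_deriv_smul measurableSet_Ioc hderiv hinj g).symm
    _ = ∫ u in Ioc 0 (t ^ ρ), g u := by rw [himg]
    _ = ∫ u in (0:ℝ)..(t ^ ρ), g u :=
        (intervalIntegral.integral_of_le (Real.rpow_nonneg ht ρ)).symm

-- integrability in unflipped form
lemma st18_integrable' (α : ℝ) (hα : 0 < α) (x : ℝ) (hx : 0 ≤ x) (W : ℝ → ℝ)
    (hW : ContinuousOn W (Icc 0 x)) :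
    IntervalIntegrable (fun u => (x - u) ^ (α - 1) * W u) volume 0 x := by
  have h1 : IntervalIntegrable (fun u : ℝ => (x - u) ^ (α - 1)) volume 0 x := by
    have := (intervalIntegrable_rpow' (show (-1:ℝ) < α - 1 by linarith)
      (a := x) (b := 0)).comp_sub_left x
    simpa using this
  apply h1.mul_continuousOn
  rwa [Set.uIcc_of_le hx]

-- splitting off the exponential
lemma st18_exp_split (σ α x : ℝ) (W : ℝ → ℝ) :
    (∫ u in (0:ℝ)..x, (x - u) ^ (α - 1) * (Real.exp (-σ * (x - u)) * W u))
      = Real.exp (-σ * x) *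
        ∫ u in (0:ℝ)..x, (x - u) ^ (α - 1) * (Real.exp (σ * u) * W u) := by
  rw [← intervalIntegral.integral_const_mul]
  apply intervalIntegral.integral_congr
  intro u _
  simp only
  rw [show -σ * (x - u) = -σ * x + σ * u by ring, Real.exp_add]
  ring

lemma st18_aux (σ α X K M L : ℝ) (hσ : 0 < σ) (hα : 0 < α) (hX : 0 < X) (hK : 0 < K)
    (G : ℝ → ℝ) (hG : Continuous G) (Φ : ℝ → ℝ → ℝ)
    (hΦc : ContinuousOn (fun p : ℝ × ℝ => Φ p.1 p.2)
      {p : ℝ × ℝ | p.1 ∈ Icc 0 X ∧ |p.2 - G p.1| ≤ K})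
    (hΦM : ∀ p ∈ {p : ℝ × ℝ | p.1 ∈ Icc 0 X ∧ |p.2 - G p.1| ≤ K}, |Φ p.1 p.2| ≤ M)
    (hΦL : ∀ u y₁ y₂ : ℝ, (u, y₁) ∈ {p : ℝ × ℝ | p.1 ∈ Icc 0 X ∧ |p.2 - G p.1| ≤ K} →
      (u, y₂) ∈ {p : ℝ × ℝ | p.1 ∈ Icc 0 X ∧ |p.2 - G p.1| ≤ K} →
      |Φ u y₁ - Φ u y₂| ≤ L * |y₁ - y₂|)
    (hL : L * X ^ α < Real.Gamma (α + 1)) (hM : M * X ^ α ≤ Real.Gamma (α + 1) * K) :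
    ∃ χ : ℝ → ℝ, ContinuousOn χ (Icc 0 X) ∧
      (∀ x ∈ Icc 0 X, χ x = G x + (Real.Gamma α)⁻¹ *
          ∫ u in (0:ℝ)..x, (x - u) ^ (α - 1) * (Real.exp (-σ * (x - u)) * Φ u (χ u))) ∧
      ∀ χ' : ℝ → ℝ, ContinuousOn χ' (Icc 0 X) →
        (∀ x ∈ Icc 0 X, χ' x = G x + (Real.Gamma α)⁻¹ *
          ∫ u in (0:ℝ)..x, (x - u) ^ (α - 1) * (Real.exp (-σ * (x - u)) * Φ u (χ' u))) →
        ∀ x ∈ Icc 0 X, χ' x = χ x := by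
  have hXle : (0:ℝ) ≤ X := hX.le
  have hΓ : 0 < Real.Gamma α := Real.Gamma_pos_of_pos hα
  have hΓ1 : Real.Gamma (α + 1) = α * Real.Gamma α := Real.Gamma_add_one hα.ne'
  have hΓ1pos : 0 < Real.Gamma (α + 1) := by rw [hΓ1]; positivity
  set Hs : Set (ℝ × ℝ) := {p : ℝ × ℝ | p.1 ∈ Icc 0 X ∧ |p.2 - G p.1| ≤ K} with hHsdef
  have hM0 : 0 ≤ M := le_trans (abs_nonneg _) (hΦM (0, G 0) ⟨⟨le_rfl, hXle⟩, by simp [hK.le]⟩)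
  have hL0 : 0 ≤ L := by
    have h1 : ((0:ℝ), G 0 + K) ∈ Hs := ⟨⟨le_rfl, hXle⟩, by simp [abs_of_nonneg hK.le]⟩
    have h2 : ((0:ℝ), G 0) ∈ Hs := ⟨⟨le_rfl, hXle⟩, by simp [hK.le]⟩
    have h3 := le_trans (abs_nonneg _) (hΦL 0 (G 0 + K) (G 0) h1 h2)
    have habs : |G 0 + K - G 0| = K := by
      rw [show G 0 + K - G 0 = K by ring, abs_of_nonneg hK.le]
    rw [habs] at h3
    nlinarith
  set G' : C(Icc (0:ℝ) X, ℝ) := ⟨fun x => G x, hG.comp continuous_subtype_val⟩ with hG'def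
  -- extension of Φ along a continuous map
  set Φe : C(Icc (0:ℝ) X, ℝ) → ℝ → ℝ :=
    fun χ => IccExtend hXle (fun u : Icc (0:ℝ) X => Φ u (χ u)) with hΦedef
  have hΦe_val : ∀ (χ : C(Icc (0:ℝ) X, ℝ)) (u : ℝ) (hu : u ∈ Icc 0 X),
      Φe χ u = Φ u (χ ⟨u, hu⟩) := fun χ u hu => IccExtend_of_mem hXle _ hu
  have hmem : ∀ (χ : C(Icc (0:ℝ) X, ℝ)), dist χ G' ≤ K →
      ∀ u : Icc (0:ℝ) X, ((u : ℝ), χ u) ∈ Hs := by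
    intro χ hχ u
    refine ⟨u.2, ?_⟩
    have := ContinuousMap.dist_apply_le_dist (f := χ) (g := G') u
    rw [Real.dist_eq] at this
    exact le_trans this hχ
  have hΦe_cont : ∀ (χ : C(Icc (0:ℝ) X, ℝ)), dist χ G' ≤ K → Continuous (Φe χ) := by
    intro χ hχ
    apply Continuous.Icc_extend'
    exact hΦc.comp_continuous (continuous_subtype_val.prodMk χ.continuous) (hmem χ hχ)
  have hΦe_bd : ∀ (χ : C(Icc (0:ℝ) X, ℝ)), dist χ G' ≤ K →
      ∀ u ∈ Icc (0:ℝ) X, |Φe χ u| ≤ M := by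
    intro χ hχ u hu
    rw [hΦe_val χ u hu]
    exact hΦM _ (hmem χ hχ ⟨u, hu⟩)
  have hexc : ∀ x : ℝ, Continuous (fun u : ℝ => Real.exp (-σ * (x - u))) :=
    fun x => Real.continuous_exp.comp
      (continuous_const.mul (continuous_const.sub continuous_id))
  have hexc2 : Continuous (fun u : ℝ => Real.exp (σ * u)) :=
    Real.continuous_exp.comp (continuous_const.mul continuous_id)
  have hexc3 : Continuous (fun x : ℝ => Real.exp (-σ * x)) :=
    Real.continuous_exp.comp (continuous_const.mul continuous_id)
  -- the operator
  set Tf : C(Icc (0:ℝ) X, ℝ) → ℝ → ℝ := fun χ x => G x + (Real.Gamma α)⁻¹ *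
      ∫ u in (0:ℝ)..x, (x - u) ^ (α - 1) * (Real.exp (-σ * (x - u)) * Φe χ u) with hTfdef
  -- pointwise bound for distance to G
  have hself : ∀ (χ : C(Icc (0:ℝ) X, ℝ)), dist χ G' ≤ K →
      ∀ x ∈ Icc (0:ℝ) X, |Tf χ x - G x| ≤ K := by
    intro χ hχ x hx
    have hb : |∫ u in (0:ℝ)..x, (x - u) ^ (α - 1) * (Real.exp (-σ * (x - u)) * Φe χ u)|
        ≤ M * x ^ α / α := by
      refine st18_bound_conv α hα x hx.1 _
        (((hexc x).mul (hΦe_cont χ hχ)).continuousOn) M hM0 ?_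
      intro u hu
      show |Real.exp (-σ * (x - u)) * Φe χ u| ≤ M
      rw [abs_mul, abs_of_nonneg (Real.exp_nonneg _)]
      have he : Real.exp (-σ * (x - u)) ≤ 1 := by
        rw [Real.exp_le_one_iff]
        nlinarith [hu.1, hu.2, hσ]
      have hΦb := hΦe_bd χ hχ u ⟨hu.1, le_trans hu.2 hx.2⟩
      nlinarith [abs_nonneg (Φe χ u), Real.exp_nonneg (-σ * (x - u))]
    have heq : |Tf χ x - G x| = (Real.Gamma α)⁻¹ *
        |∫ u in (0:ℝ)..x, (x - u) ^ (α - 1) * (Real.exp (-σ * (x - u)) * Φe χ u)| := by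
      simp only [hTfdef, add_sub_cancel_left, abs_mul, abs_of_nonneg (inv_nonneg.2 hΓ.le)]
    rw [heq]
    have hxα : x ^ α ≤ X ^ α := Real.rpow_le_rpow hx.1 hx.2 hα.le
    calc (Real.Gamma α)⁻¹ * |∫ u in (0:ℝ)..x, (x - u) ^ (α - 1) *
            (Real.exp (-σ * (x - u)) * Φe χ u)|
        ≤ (Real.Gamma α)⁻¹ * (M * x ^ α / α) :=
          mul_le_mul_of_nonneg_left hb (inv_nonneg.2 hΓ.le)
      _ = M * x ^ α / Real.Gamma (α + 1) := by
          rw [hΓ1, div_eq_mul_inv, div_eq_mul_inv, mul_inv]; ring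
      _ ≤ M * X ^ α / Real.Gamma (α + 1) :=
          (div_le_div_iff_of_pos_right hΓ1pos).2 (mul_le_mul_of_nonneg_left hxα hM0)
      _ ≤ K := by rw [div_le_iff₀ hΓ1pos]; linarith [hM]
  -- continuity of Tf χ
  have hTcont : ∀ (χ : C(Icc (0:ℝ) X, ℝ)), dist χ G' ≤ K →
      ContinuousOn (Tf χ) (Icc 0 X) := by
    intro χ hχ
    have hζc : Continuous (fun u => Real.exp (σ * u) * Φe χ u) :=
      hexc2.mul (hΦe_cont χ hχ)
    have hJ : ContinuousOn
        (fun x => ∫ u in (0:ℝ)..x, (x - u) ^ (α - 1) *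
          (Real.exp (σ * u) * Φe χ u)) (Icc 0 X) :=
      st18_cont α hα _ hζc X hXle
    have hcc : ContinuousOn (fun x => G x + (Real.Gamma α)⁻¹ *
        (Real.exp (-σ * x) * ∫ u in (0:ℝ)..x, (x - u) ^ (α - 1) *
          (Real.exp (σ * u) * Φe χ u))) (Icc 0 X) := by
      apply hG.continuousOn.add
      apply continuousOn_const.mul
      exact hexc3.continuousOn.mul hJ
    apply hcc.congr
    intro x _
    simp only [hTfdef]
    rw [st18_exp_split]
  -- contraction estimate
  have hcontr : ∀ (χ₁ χ₂ : C(Icc (0:ℝ) X, ℝ)), dist χ₁ G' ≤ K → dist χ₂ G' ≤ K →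
      ∀ x ∈ Icc (0:ℝ) X, |Tf χ₁ x - Tf χ₂ x|
        ≤ L * X ^ α / Real.Gamma (α + 1) * dist χ₁ χ₂ := by
    intro χ₁ χ₂ hχ₁ hχ₂ x hx
    set D := dist χ₁ χ₂ with hDdef
    have hD0 : 0 ≤ D := dist_nonneg
    have hint1 : IntervalIntegrable
        (fun u => (x - u) ^ (α - 1) * (Real.exp (-σ * (x - u)) * Φe χ₁ u)) volume 0 x :=
      st18_integrable' α hα x hx.1 _ (((hexc x).mul (hΦe_cont χ₁ hχ₁)).continuousOn)
    have hint2 : IntervalIntegrable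
        (fun u => (x - u) ^ (α - 1) * (Real.exp (-σ * (x - u)) * Φe χ₂ u)) volume 0 x :=
      st18_integrable' α hα x hx.1 _ (((hexc x).mul (hΦe_cont χ₂ hχ₂)).continuousOn)
    have h1 : (∫ u in (0:ℝ)..x, (x - u) ^ (α - 1) *
          (Real.exp (-σ * (x - u)) * (Φe χ₁ u - Φe χ₂ u)))
        = (∫ u in (0:ℝ)..x, (x - u) ^ (α - 1) * (Real.exp (-σ * (x - u)) * Φe χ₁ u))
          - ∫ u in (0:ℝ)..x, (x - u) ^ (α - 1) * (Real.exp (-σ * (x - u)) * Φe χ₂ u) := by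
      rw [← intervalIntegral.integral_sub hint1 hint2]
      apply intervalIntegral.integral_congr
      intro u _
      simp only
      ring
    have hdiff : Tf χ₁ x - Tf χ₂ x = (Real.Gamma α)⁻¹ *
        ∫ u in (0:ℝ)..x, (x - u) ^ (α - 1) *
          (Real.exp (-σ * (x - u)) * (Φe χ₁ u - Φe χ₂ u)) := by
      simp only [hTfdef]
      rw [h1]
      ring
    rw [hdiff]
    have hb : |∫ u in (0:ℝ)..x, (x - u) ^ (α - 1) *
        (Real.exp (-σ * (x - u)) * (Φe χ₁ u - Φe χ₂ u))| ≤ L * D * x ^ α / α := by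
      refine st18_bound_conv α hα x hx.1 _
        (((hexc x).mul ((hΦe_cont χ₁ hχ₁).sub (hΦe_cont χ₂ hχ₂))).continuousOn)
        (L * D) (mul_nonneg hL0 hD0) ?_
      intro u hu
      have huX : u ∈ Icc (0:ℝ) X := ⟨hu.1, le_trans hu.2 hx.2⟩
      show |Real.exp (-σ * (x - u)) * (Φe χ₁ u - Φe χ₂ u)| ≤ L * D
      rw [abs_mul, abs_of_nonneg (Real.exp_nonneg _)]
      have he : Real.exp (-σ * (x - u)) ≤ 1 := by
        rw [Real.exp_le_one_iff]
        nlinarith [hu.1, hu.2, hσ]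
      have hLb : |Φe χ₁ u - Φe χ₂ u| ≤ L * D := by
        rw [hΦe_val χ₁ u huX, hΦe_val χ₂ u huX]
        have ha1 := hΦL u (χ₁ ⟨u, huX⟩) (χ₂ ⟨u, huX⟩)
          (hmem χ₁ hχ₁ ⟨u, huX⟩) (hmem χ₂ hχ₂ ⟨u, huX⟩)
        have ha2 : |χ₁ ⟨u, huX⟩ - χ₂ ⟨u, huX⟩| ≤ D := by
          have := ContinuousMap.dist_apply_le_dist (f := χ₁) (g := χ₂) ⟨u, huX⟩
          rwa [Real.dist_eq] at this
        exact le_trans ha1 (mul_le_mul_of_nonneg_left ha2 hL0)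
      nlinarith [abs_nonneg (Φe χ₁ u - Φe χ₂ u), Real.exp_nonneg (-σ * (x - u)),
        mul_nonneg hL0 hD0]
    have hxα : x ^ α ≤ X ^ α := Real.rpow_le_rpow hx.1 hx.2 hα.le
    calc |(Real.Gamma α)⁻¹ * ∫ u in (0:ℝ)..x, (x - u) ^ (α - 1) *
            (Real.exp (-σ * (x - u)) * (Φe χ₁ u - Φe χ₂ u))|
        = (Real.Gamma α)⁻¹ * |∫ u in (0:ℝ)..x, (x - u) ^ (α - 1) *
            (Real.exp (-σ * (x - u)) * (Φe χ₁ u - Φe χ₂ u))| := by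
          rw [abs_mul, abs_of_nonneg (inv_nonneg.2 hΓ.le)]
      _ ≤ (Real.Gamma α)⁻¹ * (L * D * x ^ α / α) :=
          mul_le_mul_of_nonneg_left hb (inv_nonneg.2 hΓ.le)
      _ = L * x ^ α / Real.Gamma (α + 1) * D := by
          rw [hΓ1, div_eq_mul_inv, div_eq_mul_inv, mul_inv]; ring
      _ ≤ L * X ^ α / Real.Gamma (α + 1) * D := by
          apply mul_le_mul_of_nonneg_right _ hD0
          exact (div_le_div_iff_of_pos_right hΓ1pos).2 (mul_le_mul_of_nonneg_left hxα hL0)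
  -- Banach fixed point setup
  haveI : Nonempty (Metric.closedBall G' K) := ⟨⟨G', Metric.mem_closedBall_self hK.le⟩⟩
  haveI : CompleteSpace (Metric.closedBall G' K) :=
    (Metric.isClosed_closedBall (x := G') (ε := K)).completeSpace_coe
  have hTmem : ∀ χ : Metric.closedBall G' K,
      (⟨(Icc (0:ℝ) X).restrict (Tf χ.1),
        (hTcont χ.1 (Metric.mem_closedBall.1 χ.2)).restrict⟩ : C(Icc (0:ℝ) X, ℝ))
        ∈ Metric.closedBall G' K := by
    intro χ
    rw [Metric.mem_closedBall]
    rw [ContinuousMap.dist_le hK.le]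
    intro x
    rw [Real.dist_eq]
    exact hself χ.1 (Metric.mem_closedBall.1 χ.2) x x.2
  set T : Metric.closedBall G' K → Metric.closedBall G' K :=
    fun χ => ⟨⟨(Icc (0:ℝ) X).restrict (Tf χ.1),
      (hTcont χ.1 (Metric.mem_closedBall.1 χ.2)).restrict⟩, hTmem χ⟩ with hTdef
  set κ : NNReal := ⟨L * X ^ α / Real.Gamma (α + 1),
    div_nonneg (mul_nonneg hL0 (Real.rpow_nonneg hXle α)) hΓ1pos.le⟩ with hκdef
  have hκcontr : ContractingWith κ T := by
    constructor
    · rw [← NNReal.coe_lt_coe]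
      exact (div_lt_one hΓ1pos).2 hL
    · apply LipschitzWith.of_dist_le_mul
      intro χ₁ χ₂
      rw [Subtype.dist_eq, Subtype.dist_eq]
      have h0 : (0:ℝ) ≤ (κ : ℝ) * dist (χ₁ : C(Icc (0:ℝ) X, ℝ)) (χ₂ : C(Icc (0:ℝ) X, ℝ)) :=
        mul_nonneg κ.2 dist_nonneg
      rw [ContinuousMap.dist_le h0]
      intro x
      rw [Real.dist_eq]
      exact hcontr χ₁.1 χ₂.1 (Metric.mem_closedBall.1 χ₁.2)
        (Metric.mem_closedBall.1 χ₂.2) x x.2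
  set χs : Metric.closedBall G' K := ContractingWith.fixedPoint T hκcontr with hχsdef
  have hfix : T χs = χs := hκcontr.fixedPoint_isFixedPt
  -- the global solution
  set χ : ℝ → ℝ := IccExtend hXle (χs.1 : C(Icc (0:ℝ) X, ℝ)) with hχdef
  have hχcont : Continuous χ := Continuous.Icc_extend' (χs.1).continuous
  have hχval : ∀ (u : ℝ) (hu : u ∈ Icc 0 X), χ u = χs.1 ⟨u, hu⟩ :=
    fun u hu => IccExtend_of_mem hXle _ hu
  -- key: for ξ in the ball, integrals with Φe ξ match integrals with Φ ∘ IccExtend ξ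
  have hIcongr : ∀ (ξ : C(Icc (0:ℝ) X, ℝ)) (w : ℝ → ℝ),
      (∀ (u : ℝ) (hu : u ∈ Icc 0 X), w u = ξ ⟨u, hu⟩) →
      ∀ x ∈ Icc (0:ℝ) X,
      (∫ u in (0:ℝ)..x, (x - u) ^ (α - 1) * (Real.exp (-σ * (x - u)) * Φe ξ u))
        = ∫ u in (0:ℝ)..x, (x - u) ^ (α - 1) * (Real.exp (-σ * (x - u)) * Φ u (w u)) := by
    intro ξ w hw x hx
    apply intervalIntegral.integral_congr
    intro u hu
    rw [Set.uIcc_of_le hx.1] at hu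
    have huX : u ∈ Icc (0:ℝ) X := ⟨hu.1, le_trans hu.2 hx.2⟩
    simp only
    rw [hΦe_val ξ u huX, hw u huX]
  -- existence part
  have hexist : ∀ x ∈ Icc (0:ℝ) X, χ x = G x + (Real.Gamma α)⁻¹ *
      ∫ u in (0:ℝ)..x, (x - u) ^ (α - 1) * (Real.exp (-σ * (x - u)) * Φ u (χ u)) := by
    intro x hx
    have h1 : χ x = Tf χs.1 x := by
      rw [hχval x hx]
      conv_lhs => rw [← hfix]
      rfl
    rw [h1]
    simp only [hTfdef]
    rw [hIcongr χs.1 χ (fun u hu => hχval u hu) x hx]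
  refine ⟨χ, hχcont.continuousOn, hexist, ?_⟩
  -- uniqueness
  intro χ' hχ'c hχ'eq
  set ω : ℝ → ℝ := fun x => |χ' x - G x| with hωdef
  have hωcont : ContinuousOn ω (Icc 0 X) := (hχ'c.sub hG.continuousOn).abs
  -- a priori bound where the tube condition holds
  have hbound : ∀ c ∈ Icc (0:ℝ) X, (∀ u ∈ Icc (0:ℝ) c, ((u:ℝ), χ' u) ∈ Hs) →
      ∀ y ∈ Icc (0:ℝ) c, ω y ≤ M * c ^ α / Real.Gamma (α + 1) := by
    intro c hc htube y hy
    have hy' : y ∈ Icc (0:ℝ) X := ⟨hy.1, le_trans hy.2 hc.2⟩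
    have hΦcy : ContinuousOn (fun u => Φ u (χ' u)) (Icc 0 y) := by
      apply hΦc.comp (continuousOn_id.prodMk
        (hχ'c.mono (fun u hu => ⟨hu.1, le_trans hu.2 hy'.2⟩)))
      intro u hu
      exact htube u ⟨hu.1, le_trans hu.2 hy.2⟩
    have hb : |∫ u in (0:ℝ)..y, (y - u) ^ (α - 1) *
        (Real.exp (-σ * (y - u)) * Φ u (χ' u))| ≤ M * y ^ α / α := by
      refine st18_bound_conv α hα y hy.1 _
        ((hexc y).continuousOn.mul hΦcy) M hM0 ?_
      intro u hu
      show |Real.exp (-σ * (y - u)) * Φ u (χ' u)| ≤ M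
      rw [abs_mul, abs_of_nonneg (Real.exp_nonneg _)]
      have he : Real.exp (-σ * (y - u)) ≤ 1 := by
        rw [Real.exp_le_one_iff]
        nlinarith [hu.1, hu.2, hσ]
      have hΦb : |Φ u (χ' u)| ≤ M := hΦM _ (htube u ⟨hu.1, le_trans hu.2 hy.2⟩)
      nlinarith [abs_nonneg (Φ u (χ' u)), Real.exp_nonneg (-σ * (y - u))]
    have heq : ω y = (Real.Gamma α)⁻¹ * |∫ u in (0:ℝ)..y, (y - u) ^ (α - 1) *
        (Real.exp (-σ * (y - u)) * Φ u (χ' u))| := by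
      rw [hωdef]
      simp only
      rw [hχ'eq y hy']
      rw [add_sub_cancel_left, abs_mul, abs_of_nonneg (inv_nonneg.2 hΓ.le)]
    rw [heq]
    have hyα : y ^ α ≤ c ^ α := Real.rpow_le_rpow hy.1 hy.2 hα.le
    calc (Real.Gamma α)⁻¹ * |∫ u in (0:ℝ)..y, (y - u) ^ (α - 1) *
            (Real.exp (-σ * (y - u)) * Φ u (χ' u))|
        ≤ (Real.Gamma α)⁻¹ * (M * y ^ α / α) :=
          mul_le_mul_of_nonneg_left hb (inv_nonneg.2 hΓ.le)
      _ = M * y ^ α / Real.Gamma (α + 1) := by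
          rw [hΓ1, div_eq_mul_inv, div_eq_mul_inv, mul_inv]; ring
      _ ≤ M * c ^ α / Real.Gamma (α + 1) :=
          (div_le_div_iff_of_pos_right hΓ1pos).2 (mul_le_mul_of_nonneg_left hyα hM0)
  have hω0 : ω 0 = 0 := by
    rw [hωdef]
    simp only
    rw [hχ'eq 0 ⟨le_rfl, hXle⟩]
    simp
  set S : Set ℝ := {x | x ∈ Icc (0:ℝ) X ∧ ∀ u ∈ Icc (0:ℝ) x, ω u ≤ K} with hSdef
  have h0S : (0:ℝ) ∈ S := by
    refine ⟨⟨le_rfl, hXle⟩, ?_⟩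
    intro u hu
    have : u = 0 := le_antisymm hu.2 hu.1
    rw [this, hω0]
    exact hK.le
  have hSne : S.Nonempty := ⟨0, h0S⟩
  have hSbdd : BddAbove S := ⟨X, fun x hx => hx.1.2⟩
  set c := sSup S with hcdef
  have hc0 : 0 ≤ c := le_csSup hSbdd h0S
  have hcX : c ≤ X := csSup_le hSne (fun x hx => hx.1.2)
  have hlt : ∀ u, 0 ≤ u → u < c → ω u ≤ K := by
    intro u hu0 huc
    obtain ⟨x, hxS, hux⟩ := exists_lt_of_lt_csSup hSne huc
    exact hxS.2 u ⟨hu0, hux.le⟩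
  have hωcK : ω c ≤ K := by
    rcases eq_or_lt_of_le hc0 with hh | hh
    · rw [← hh, hω0]; exact hK.le
    · have hIoo : Ioo (0:ℝ) c ⊆ Icc 0 X :=
        fun u hu => ⟨hu.1.le, le_trans hu.2.le hcX⟩
      have htends : Tendsto ω (𝓝[Ioo (0:ℝ) c] c) (𝓝 (ω c)) :=
        (hωcont c ⟨hc0, hcX⟩).mono hIoo
      haveI := right_nhdsWithin_Ioo_neBot hh
      apply le_of_tendsto htends
      filter_upwards [self_mem_nhdsWithin] with u hu
      exact hlt u hu.1.le hu.2
  have hcS : c ∈ S := by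
    refine ⟨⟨hc0, hcX⟩, ?_⟩
    intro u hu
    rcases lt_or_eq_of_le hu.2 with hh | hh
    · exact hlt u hu.1 hh
    · rw [hh]; exact hωcK
  have htubec : ∀ u ∈ Icc (0:ℝ) c, ((u:ℝ), χ' u) ∈ Hs :=
    fun u hu => ⟨⟨hu.1, le_trans hu.2 hcX⟩, hcS.2 u hu⟩
  have hceqX : c = X := by
    by_contra hne
    have hcltX : c < X := lt_of_le_of_ne hcX hne
    set K' := M * c ^ α / Real.Gamma (α + 1) with hK'def
    have hK'K : K' < K := by
      rcases eq_or_lt_of_le hM0 with hh | hh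
      · rw [hK'def, ← hh]; simpa using hK
      · have hcα : c ^ α < X ^ α := Real.rpow_lt_rpow hc0 hcltX hα
        rw [hK'def, div_lt_iff₀ hΓ1pos]
        nlinarith
    have hbd' : ∀ y ∈ Icc (0:ℝ) c, ω y ≤ K' := hbound c ⟨hc0, hcX⟩ htubec
    obtain ⟨δ, hδpos, hδ⟩ := Metric.continuousWithinAt_iff.1
      (hωcont c ⟨hc0, hcX⟩) (K - K') (by linarith)
    set x' := min (c + δ / 2) X with hx'def
    have hcx' : c < x' := lt_min (by linarith) hcltX
    have hx'S : x' ∈ S := by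
      refine ⟨⟨le_trans hc0 hcx'.le, min_le_right _ _⟩, ?_⟩
      intro u hu
      rcases le_or_gt u c with hh | hh
      · exact hcS.2 u ⟨hu.1, hh⟩
      · have huI : u ∈ Icc (0:ℝ) X := ⟨hu.1, le_trans hu.2 (min_le_right _ _)⟩
        have hud : dist u c < δ := by
          rw [Real.dist_eq, abs_of_pos (by linarith)]
          have : u ≤ c + δ / 2 := le_trans hu.2 (min_le_left _ _)
          linarith
        have h5 := hδ huI hud
        rw [Real.dist_eq] at h5
        have h6 : ω u - ω c < K - K' := lt_of_le_of_lt (le_abs_self _) h5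
        have h7 : ω c ≤ K' := hbd' c ⟨hc0, le_rfl⟩
        linarith
    have : x' ≤ c := le_csSup hSbdd hx'S
    linarith
  have htubeX : ∀ u ∈ Icc (0:ℝ) X, ((u:ℝ), χ' u) ∈ Hs := by
    rw [← hceqX]
    exact htubec
  -- χ' gives a fixed point of T
  set ξ' : C(Icc (0:ℝ) X, ℝ) := ⟨(Icc (0:ℝ) X).restrict χ', hχ'c.restrict⟩ with hξ'def
  have hξ'mem : ξ' ∈ Metric.closedBall G' K := by
    rw [Metric.mem_closedBall, ContinuousMap.dist_le hK.le]
    intro x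
    rw [Real.dist_eq]
    exact (htubeX x x.2).2
  have hfixξ : T ⟨ξ', hξ'mem⟩ = ⟨ξ', hξ'mem⟩ := by
    apply Subtype.ext
    apply ContinuousMap.ext
    intro x
    show Tf ξ' x = χ' x
    have hcongr := hIcongr ξ' χ' (fun u hu => rfl) x x.2
    simp only [hTfdef]
    rw [hcongr]
    exact (hχ'eq x x.2).symm
  have huniq : (⟨ξ', hξ'mem⟩ : Metric.closedBall G' K) = χs :=
    hκcontr.fixedPoint_unique hfixξ
  intro x hx
  have h1 : χ' x = ξ' ⟨x, hx⟩ := rfl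
  have h2 : χ x = χs.1 ⟨x, hx⟩ := hχval x hx
  rw [h1, h2, ← huniq]

theorem stmt18 (σ ρ α K hstar M L h : ℝ) (hσ : 0 < σ) (hρ : 0 < ρ) (hα : 0 < α)
    (hK : 0 < K) (hhstar : 0 < hstar) (m : ℕ) (hm : m = ⌈α⌉₊)
    (bc : ℕ → ℝ) (f : ℝ → ℝ → ℝ)
    (H : Set (ℝ × ℝ))
    (hH : H = {p : ℝ × ℝ | 0 ≤ p.1 ∧ p.1 ≤ hstar ∧
      |p.2 - Real.exp (-σ * p.1 ^ ρ) *
        ∑ k ∈ Finset.range m, bc k / (k.factorial : ℝ) * (p.1 ^ ρ) ^ k| ≤ K})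
    (hfc : ContinuousOn (fun p : ℝ × ℝ => f p.1 p.2) H)
    (hfM : ∀ p ∈ H, |f p.1 p.2| ≤ M)
    (hfL : ∀ t y₁ y₂ : ℝ, (t, y₁) ∈ H → (t, y₂) ∈ H → |f t y₁ - f t y₂| ≤ L * |y₁ - y₂|)
    (hh : 0 < h) (hh1 : h ≤ hstar) (hh2 : L * h ^ (ρ * α) < Real.Gamma (α + 1))
    (hh3 : M * h ^ (ρ * α) ≤ Real.Gamma (α + 1) * K) :
    ∃ ψ : ℝ → ℝ,
      (ContinuousOn ψ (Set.Icc 0 h) ∧ ∀ t ∈ Set.Icc (0 : ℝ) h,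
        ψ t = Real.exp (-σ * t ^ ρ) *
            (∑ k ∈ Finset.range m, bc k / (k.factorial : ℝ) * (t ^ ρ) ^ k) +
          ρ / Real.Gamma α * ∫ s in (0 : ℝ)..t, s ^ (ρ - 1) * (t ^ ρ - s ^ ρ) ^ (α - 1) *
            Real.exp (-σ * (t ^ ρ - s ^ ρ)) * f s (ψ s)) ∧
      ∀ φ : ℝ → ℝ,
        (ContinuousOn φ (Set.Icc 0 h) ∧ ∀ t ∈ Set.Icc (0 : ℝ) h,
          φ t = Real.exp (-σ * t ^ ρ) *
              (∑ k ∈ Finset.range m, bc k / (k.factorial : ℝ) * (t ^ ρ) ^ k) +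
            ρ / Real.Gamma α * ∫ s in (0 : ℝ)..t, s ^ (ρ - 1) * (t ^ ρ - s ^ ρ) ^ (α - 1) *
              Real.exp (-σ * (t ^ ρ - s ^ ρ)) * f s (φ s)) →
        ∀ t ∈ Set.Icc (0 : ℝ) h, φ t = ψ t := by
  have hρinv : 0 < ρ⁻¹ := inv_pos.2 hρ
  have hr : Continuous (fun x : ℝ => x ^ ρ⁻¹) :=
    continuous_iff_continuousAt.2 fun x =>
      Real.continuousAt_rpow_const x ρ⁻¹ (Or.inr hρinv.le)
  set X := h ^ ρ with hXdef
  have hXpos : 0 < X := Real.rpow_pos_of_pos hh ρ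
  have hXα : X ^ α = h ^ (ρ * α) := (Real.rpow_mul hh.le ρ α).symm
  set G : ℝ → ℝ := fun x => Real.exp (-σ * x) *
    ∑ k ∈ Finset.range m, bc k / (k.factorial : ℝ) * x ^ k with hGdef
  have hGcont : Continuous G := by
    apply Continuous.mul
    · exact Real.continuous_exp.comp (continuous_const.mul continuous_id)
    · exact continuous_finset_sum _ fun k _ => continuous_const.mul (continuous_pow k)
  set Φ : ℝ → ℝ → ℝ := fun u y => f (u ^ ρ⁻¹) y with hΦdef
  have hmemH : ∀ p : ℝ × ℝ, p.1 ∈ Icc 0 X → |p.2 - G p.1| ≤ K →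
      (p.1 ^ ρ⁻¹, p.2) ∈ H := by
    intro p hp1 hp2
    rw [hH]
    refine ⟨Real.rpow_nonneg hp1.1 _, ?_, ?_⟩
    · calc p.1 ^ ρ⁻¹ ≤ X ^ ρ⁻¹ :=
          Real.rpow_le_rpow hp1.1 hp1.2 (inv_nonneg.2 hρ.le)
        _ = h := by rw [hXdef]; exact Real.rpow_rpow_inv hh.le hρ.ne'
        _ ≤ hstar := hh1
    · have hinv : (p.1 ^ ρ⁻¹) ^ ρ = p.1 := Real.rpow_inv_rpow hp1.1 hρ.ne'
      show |p.2 - Real.exp (-σ * (p.1 ^ ρ⁻¹) ^ ρ) *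
        ∑ k ∈ Finset.range m, bc k / (k.factorial : ℝ) * ((p.1 ^ ρ⁻¹) ^ ρ) ^ k| ≤ K
      rw [hinv]
      simp only [hGdef] at hp2
      exact hp2
  have hΦc : ContinuousOn (fun p : ℝ × ℝ => Φ p.1 p.2)
      {p : ℝ × ℝ | p.1 ∈ Icc 0 X ∧ |p.2 - G p.1| ≤ K} := by
    have hmap : MapsTo (fun p : ℝ × ℝ => (p.1 ^ ρ⁻¹, p.2))
        {p : ℝ × ℝ | p.1 ∈ Icc 0 X ∧ |p.2 - G p.1| ≤ K} H :=
      fun p hp => hmemH p hp.1 hp.2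
    exact hfc.comp ((hr.comp continuous_fst).prodMk continuous_snd).continuousOn hmap
  have hΦM' : ∀ p ∈ {p : ℝ × ℝ | p.1 ∈ Icc 0 X ∧ |p.2 - G p.1| ≤ K},
      |Φ p.1 p.2| ≤ M := fun p hp => hfM _ (hmemH p hp.1 hp.2)
  have hΦL' : ∀ u y₁ y₂ : ℝ,
      (u, y₁) ∈ {p : ℝ × ℝ | p.1 ∈ Icc 0 X ∧ |p.2 - G p.1| ≤ K} →
      (u, y₂) ∈ {p : ℝ × ℝ | p.1 ∈ Icc 0 X ∧ |p.2 - G p.1| ≤ K} →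
      |Φ u y₁ - Φ u y₂| ≤ L * |y₁ - y₂| := fun u y₁ y₂ h1 h2 =>
    hfL (u ^ ρ⁻¹) y₁ y₂ (hmemH _ h1.1 h1.2) (hmemH _ h2.1 h2.2)
  have hL' : L * X ^ α < Real.Gamma (α + 1) := by rw [hXα]; exact hh2
  have hM' : M * X ^ α ≤ Real.Gamma (α + 1) * K := by rw [hXα]; exact hh3
  obtain ⟨χ, hχc, hχeq, hχuniq⟩ :=
    st18_aux σ α X K M L hσ hα hXpos hK G hGcont Φ hΦc hΦM' hΦL' hL' hM'
  have main_cov : ∀ (w : ℝ → ℝ) (t : ℝ), 0 ≤ t → t ≤ h →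
      (ρ / Real.Gamma α * ∫ s in (0:ℝ)..t, s ^ (ρ - 1) * (t ^ ρ - s ^ ρ) ^ (α - 1) *
        Real.exp (-σ * (t ^ ρ - s ^ ρ)) * f s (w (s ^ ρ)))
      = (Real.Gamma α)⁻¹ * ∫ u in (0:ℝ)..(t ^ ρ), (t ^ ρ - u) ^ (α - 1) *
        (Real.exp (-σ * (t ^ ρ - u)) * Φ u (w u)) := by
    intro w t ht0 hth
    rw [← st18_cov ρ hρ t ht0
      (fun u => (t ^ ρ - u) ^ (α - 1) * (Real.exp (-σ * (t ^ ρ - u)) * Φ u (w u)))]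
    have hce : EqOn
        (fun s => ρ * s ^ (ρ - 1) *
          ((t ^ ρ - s ^ ρ) ^ (α - 1) *
            (Real.exp (-σ * (t ^ ρ - s ^ ρ)) * Φ (s ^ ρ) (w (s ^ ρ)))))
        (fun s => ρ * (s ^ (ρ - 1) * (t ^ ρ - s ^ ρ) ^ (α - 1) *
          Real.exp (-σ * (t ^ ρ - s ^ ρ)) * f s (w (s ^ ρ))))
        (Set.uIcc 0 t) := by
      intro s hs
      rw [Set.uIcc_of_le ht0] at hs
      have h1 : (s ^ ρ) ^ ρ⁻¹ = s := Real.rpow_rpow_inv hs.1 hρ.ne'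
      simp only [hΦdef, h1]
      ring
    rw [intervalIntegral.integral_congr hce, intervalIntegral.integral_const_mul]
    rw [div_eq_mul_inv]
    ring
  refine ⟨fun t => χ (t ^ ρ), ⟨?_, ?_⟩, ?_⟩
  · -- continuity
    have hpow : ContinuousOn (fun t : ℝ => t ^ ρ) (Icc 0 h) := fun t _ =>
      (Real.continuousAt_rpow_const t ρ (Or.inr hρ.le)).continuousWithinAt
    exact hχc.comp hpow fun t ht =>
      ⟨Real.rpow_nonneg ht.1 _, Real.rpow_le_rpow ht.1 ht.2 hρ.le⟩
  · -- the equation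
    intro t ht
    have hmem : t ^ ρ ∈ Icc 0 X :=
      ⟨Real.rpow_nonneg ht.1 _, Real.rpow_le_rpow ht.1 ht.2 hρ.le⟩
    have h1 := hχeq (t ^ ρ) hmem
    have h2 := main_cov χ t ht.1 ht.2
    show χ (t ^ ρ) = _
    rw [h1, ← h2]
  · -- uniqueness
    rintro φ ⟨hφc, hφeq⟩ t ht
    set χ' : ℝ → ℝ := fun x => φ (x ^ ρ⁻¹) with hχ'def
    have hmapsX : MapsTo (fun x : ℝ => x ^ ρ⁻¹) (Icc 0 X) (Icc 0 h) := by
      intro x hx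
      refine ⟨Real.rpow_nonneg hx.1 _, ?_⟩
      calc x ^ ρ⁻¹ ≤ X ^ ρ⁻¹ := Real.rpow_le_rpow hx.1 hx.2 (inv_nonneg.2 hρ.le)
        _ = h := by rw [hXdef]; exact Real.rpow_rpow_inv hh.le hρ.ne'
    have hχ'c : ContinuousOn χ' (Icc 0 X) := hφc.comp hr.continuousOn hmapsX
    have hχ'eq : ∀ x ∈ Icc 0 X, χ' x = G x + (Real.Gamma α)⁻¹ *
        ∫ u in (0:ℝ)..x, (x - u) ^ (α - 1) *
          (Real.exp (-σ * (x - u)) * Φ u (χ' u)) := by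
      intro x hx
      set t' := x ^ ρ⁻¹ with ht'def
      have ht'm : t' ∈ Icc 0 h := hmapsX hx
      have hxt : t' ^ ρ = x := Real.rpow_inv_rpow hx.1 hρ.ne'
      have h3 := hφeq t' ht'm
      have h4 : (∫ s in (0:ℝ)..t', s ^ (ρ - 1) * (t' ^ ρ - s ^ ρ) ^ (α - 1) *
            Real.exp (-σ * (t' ^ ρ - s ^ ρ)) * f s (φ s))
          = ∫ s in (0:ℝ)..t', s ^ (ρ - 1) * (t' ^ ρ - s ^ ρ) ^ (α - 1) *
            Real.exp (-σ * (t' ^ ρ - s ^ ρ)) * f s (χ' (s ^ ρ)) := by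
        apply intervalIntegral.integral_congr
        intro s hs
        rw [Set.uIcc_of_le ht'm.1] at hs
        have : χ' (s ^ ρ) = φ s := by
          simp only [hχ'def]
          rw [Real.rpow_rpow_inv hs.1 hρ.ne']
        simp only
        rw [this]
      have h5 := main_cov χ' t' ht'm.1 ht'm.2
      calc χ' x = φ t' := rfl
        _ = Real.exp (-σ * t' ^ ρ) *
              (∑ k ∈ Finset.range m, bc k / (k.factorial : ℝ) * (t' ^ ρ) ^ k) +
            ρ / Real.Gamma α * ∫ s in (0:ℝ)..t', s ^ (ρ - 1) *
              (t' ^ ρ - s ^ ρ) ^ (α - 1) *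
              Real.exp (-σ * (t' ^ ρ - s ^ ρ)) * f s (φ s) := h3
        _ = G (t' ^ ρ) + (Real.Gamma α)⁻¹ *
            ∫ u in (0:ℝ)..(t' ^ ρ), (t' ^ ρ - u) ^ (α - 1) *
              (Real.exp (-σ * (t' ^ ρ - u)) * Φ u (χ' u)) := by
            rw [h4, h5]
        _ = G x + (Real.Gamma α)⁻¹ * ∫ u in (0:ℝ)..x, (x - u) ^ (α - 1) *
              (Real.exp (-σ * (x - u)) * Φ u (χ' u)) := by rw [hxt]
    have huniq := hχuniq χ' hχ'c hχ'eq
    have hmem : t ^ ρ ∈ Icc 0 X :=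
      ⟨Real.rpow_nonneg ht.1 _, Real.rpow_le_rpow ht.1 ht.2 hρ.le⟩
    have h6 : χ' (t ^ ρ) = χ (t ^ ρ) := huniq (t ^ ρ) hmem
    have h7 : χ' (t ^ ρ) = φ t := by
      simp only [hχ'def]
      rw [Real.rpow_rpow_inv ht.1 hρ.ne']
    show φ t = χ (t ^ ρ)
    rw [← h7, h6]
end
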